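/- arXiv:2111.05532 — 6 statements merged into one kernel-verified Lean document; each statement's English description precedes it below -/
import Mathlib

section
/- Let X = ∏_{α∈A} X_α be a product of nonempty compact metric spaces, P ⊆ X a closed subset, and f : P → P a homeomorphism. Then for every α ∈ A and every countable set C ⊆ A there exists a countable f-admissible set B ⊆ A containing {α} ∪ C. -/
universe u

open Set

/-- The projection of the product `∀ i, X i` onto the partial product indexed by `B`. -/
def proj {I : Type u} {X : I → Type u} (B : Set I) (x : ∀ i, X i) : ∀ b : B, X b :=
  fun b => x b

/-- A set `B ⊆ I` is `f`-admissible for a homeomorphism `f : P ≃ₜ P` of a closed subset `P`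
of the product `∀ i, X i` if there is a homeomorphism `f_B` of `P_B = π_B(P)` with
`π_B ∘ f = f_B ∘ π_B` on `P`. -/
def IsAdmissible {I : Type u} {X : I → Type u} [∀ i, TopologicalSpace (X i)]
    (P : Set (∀ i, X i)) (f : P ≃ₜ P) (B : Set I) : Prop :=
  ∃ fB : (proj B '' P : Set (∀ b : B, X b)) ≃ₜ (proj B '' P : Set (∀ b : B, X b)),
    ∀ p : P, (fB ⟨proj B p.1, ⟨p.1, p.2, rfl⟩⟩).1 = proj B (f p).1

lemma proj_continuous {I : Type u} {X : I → Type u} [∀ i, TopologicalSpace (X i)]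
    (B : Set I) : Continuous (proj (X := X) B) :=
  continuous_pi fun b => continuous_apply b.1

/-- A continuous map from a compact subset of a product into a metric space depends on
countably many coordinates. -/
lemma exists_countable_dep {I : Type u} {X : I → Type u} [∀ i, TopologicalSpace (X i)]
    {P : Set (∀ i, X i)} [CompactSpace P] {M : Type u} [MetricSpace M]
    (g : P → M) (hg : Continuous g) :
    ∃ D : Set I, D.Countable ∧ ∀ p q : P, (∀ i ∈ D, p.1 i = q.1 i) → g p = g q := by
  have step : ∀ ε : ℝ, 0 < ε → ∃ D : Set I, D.Countable ∧
      ∀ p q : P, (∀ i ∈ D, p.1 i = q.1 i) → dist (g p) (g q) < ε := by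
    intro ε hε
    have h1 : ∀ p : P, ∃ (s : Finset I) (t : ∀ i, Set (X i)),
        (∀ i ∈ s, IsOpen (t i)) ∧ (∀ i ∈ s, p.1 i ∈ t i) ∧
        ∀ q : P, (∀ i ∈ s, q.1 i ∈ t i) → dist (g q) (g p) < ε / 2 := by
      intro p
      have hW : IsOpen {x : P | dist (g x) (g p) < ε / 2} := by
        have : {x : P | dist (g x) (g p) < ε / 2} = g ⁻¹' Metric.ball (g p) (ε / 2) := rfl
        rw [this]
        exact Metric.isOpen_ball.preimage hg
      rw [isOpen_induced_iff] at hW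
      obtain ⟨U, hUopen, hUeq⟩ := hW
      have hpU : p.1 ∈ U := by
        have : p ∈ Subtype.val ⁻¹' U := by
          rw [hUeq]; simp [dist_self, half_pos hε]
        exact this
      obtain ⟨s, t, ht, hsub⟩ := isOpen_pi_iff.mp hUopen p.1 hpU
      refine ⟨s, t, fun i hi => (ht i hi).1, fun i hi => (ht i hi).2, ?_⟩
      intro q hq
      have hqU : q.1 ∈ U := hsub (by intro i hi; exact hq i hi)
      have : q ∈ {x : P | dist (g x) (g p) < ε / 2} := by rw [← hUeq]; exact hqU
      exact this
    choose s t htop hmem hdist using h1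
    have hVopen : ∀ p : P, IsOpen (Subtype.val ⁻¹' ((s p : Set I).pi (t p)) : Set P) :=
      fun p => (isOpen_set_pi (s p).finite_toSet (fun i hi => htop p i hi)).preimage
        continuous_subtype_val
    have hcover : (univ : Set P) ⊆ ⋃ p : P, Subtype.val ⁻¹' ((s p : Set I).pi (t p)) := by
      intro p _
      exact mem_iUnion.mpr ⟨p, fun i hi => hmem p i hi⟩
    obtain ⟨F, hF⟩ := isCompact_univ.elim_finite_subcover _ hVopen hcover
    refine ⟨⋃ p ∈ F, (s p : Set I), (F.finite_toSet.biUnion fun p _ => (s p).finite_toSet).countable, ?_⟩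
    intro p q hpq
    obtain ⟨r, hrF, hpV⟩ : ∃ r ∈ F, p ∈ Subtype.val ⁻¹' ((s r : Set I).pi (t r)) := by
      have := hF (mem_univ p)
      simpa using this
    have hqV : q ∈ Subtype.val ⁻¹' ((s r : Set I).pi (t r)) := by
      intro i hi
      have : q.1 i = p.1 i := (hpq i (by exact mem_biUnion hrF hi)).symm
      rw [this]; exact hpV i hi
    have h1 := hdist r p hpV
    have h2 := hdist r q hqV
    calc dist (g p) (g q) ≤ dist (g p) (g r) + dist (g r) (g q) := dist_triangle _ _ _
      _ < ε / 2 + ε / 2 := by rw [dist_comm (g r) (g q)]; exact add_lt_add h1 h2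
      _ = ε := by ring
  choose Dn hDnc hDn using fun n : ℕ => step (1 / (n + 1)) (by positivity)
  refine ⟨⋃ n, Dn n, countable_iUnion hDnc, ?_⟩
  intro p q h
  by_contra hne
  obtain ⟨n, hn⟩ := exists_nat_one_div_lt (dist_pos.mpr hne)
  have := hDn n p q fun i hi => h i (mem_iUnion.mpr ⟨n, hi⟩)
  push_cast at hn this
  linarith

/-- For a product of nonempty compact metric spaces, a closed `P` and a homeomorphism
`f : P → P`, every point `α` and every countable `C ⊆ I` are contained in a countable
`f`-admissible set. -/
theorem stmt2 {I : Type u} {X : I → Type u} [∀ i, MetricSpace (X i)]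
    [∀ i, CompactSpace (X i)] [∀ i, Nonempty (X i)]
    (P : Set (∀ i, X i)) (hP : IsClosed P) (f : P ≃ₜ P)
    (α : I) (C : Set I) (hC : C.Countable) :
    ∃ B : Set I, B.Countable ∧ insert α C ⊆ B ∧ IsAdmissible P f B := by
  haveI : CompactSpace P := isCompact_iff_compactSpace.mp hP.isCompact
  -- one-sided enlargement
  have one_step : ∀ (g : P ≃ₜ P) (B : Set I), B.Countable → ∃ D : Set I, D.Countable ∧
      ∀ p q : P, (∀ i ∈ D, p.1 i = q.1 i) → ∀ i ∈ B, (g p).1 i = (g q).1 i := by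
    intro g B hB
    haveI : Countable B := hB.to_subtype
    letI : MetricSpace (∀ b : B, X b) := TopologicalSpace.metrizableSpaceMetric _
    have hcont : Continuous (fun p : P => proj B (g p).1) :=
      (proj_continuous B).comp (continuous_subtype_val.comp g.continuous)
    obtain ⟨D, hDc, hD⟩ := exists_countable_dep (fun p : P => proj B (g p).1) hcont
    exact ⟨D, hDc, fun p q h i hi => congrFun (hD p q h) ⟨i, hi⟩⟩
  -- combined enlargement as a function on countable sets
  have combined : ∀ s : {B : Set I // B.Countable}, ∃ s' : {B : Set I // B.Countable},
      s.1 ⊆ s'.1 ∧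
      (∀ p q : P, (∀ i ∈ s'.1, p.1 i = q.1 i) → ∀ i ∈ s.1, (f p).1 i = (f q).1 i) ∧
      (∀ p q : P, (∀ i ∈ s'.1, p.1 i = q.1 i) → ∀ i ∈ s.1, (f.symm p).1 i = (f.symm q).1 i) := by
    rintro ⟨B, hB⟩
    obtain ⟨D1, hD1c, hD1⟩ := one_step f B hB
    obtain ⟨D2, hD2c, hD2⟩ := one_step f.symm B hB
    refine ⟨⟨B ∪ D1 ∪ D2, (hB.union hD1c).union hD2c⟩, ?_, ?_, ?_⟩
    · intro i hi; exact Or.inl (Or.inl hi)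
    · intro p q h i hi
      exact hD1 p q (fun j hj => h j (Or.inl (Or.inr hj))) i hi
    · intro p q h i hi
      exact hD2 p q (fun j hj => h j (Or.inr hj)) i hi
  choose next hnext1 hnext2 hnext3 using combined
  set seq : ℕ → {B : Set I // B.Countable} :=
    fun n => next^[n] ⟨insert α C, hC.insert α⟩ with hseq
  have hseq0 : (seq 0).1 = insert α C := rfl
  have hseqS : ∀ n, seq (n + 1) = next (seq n) := fun n =>
    Function.iterate_succ_apply' next n _
  set B : Set I := ⋃ n, (seq n).1 with hBdef
  have hsub : ∀ n, (seq n).1 ⊆ B := fun n => subset_iUnion (fun n => (seq n).1) n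
  have keyf : ∀ p q : P, (∀ i ∈ B, p.1 i = q.1 i) → ∀ i ∈ B, (f p).1 i = (f q).1 i := by
    intro p q h i hi
    obtain ⟨n, hn⟩ := mem_iUnion.mp hi
    have := hnext2 (seq n) p q (fun j hj => h j (by rw [← hseqS n] at hj; exact hsub (n+1) hj)) i hn
    exact this
  have keyfs : ∀ p q : P, (∀ i ∈ B, p.1 i = q.1 i) → ∀ i ∈ B, (f.symm p).1 i = (f.symm q).1 i := by
    intro p q h i hi
    obtain ⟨n, hn⟩ := mem_iUnion.mp hi
    exact hnext3 (seq n) p q (fun j hj => h j (by rw [← hseqS n] at hj; exact hsub (n+1) hj)) i hn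
  refine ⟨B, countable_iUnion fun n => (seq n).2, by rw [← hseq0]; exact hsub 0, ?_⟩
  -- construct the homeomorphism
  set Q : Set (∀ b : B, X b) := proj B '' P with hQ
  set e : P → Q := fun p => ⟨proj B p.1, ⟨p.1, p.2, rfl⟩⟩ with he
  have hesurj : Function.Surjective e := by
    rintro ⟨y, x, hx, rfl⟩
    exact ⟨⟨x, hx⟩, rfl⟩
  have hecont : Continuous e :=
    Continuous.subtype_mk ((proj_continuous B).comp continuous_subtype_val) _
  have hq : Topology.IsQuotientMap e := (hecont.isClosedMap).isQuotientMap hecont hesurj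
  have ekey : ∀ p q : P, e p = e q → e (f p) = e (f q) := by
    intro p q h
    have h' : ∀ i ∈ B, p.1 i = q.1 i := fun i hi =>
      congrFun (congrArg Subtype.val h) ⟨i, hi⟩
    exact Subtype.ext (funext fun b => keyf p q h' b.1 b.2)
  have ekeys : ∀ p q : P, e p = e q → e (f.symm p) = e (f.symm q) := by
    intro p q h
    have h' : ∀ i ∈ B, p.1 i = q.1 i := fun i hi =>
      congrFun (congrArg Subtype.val h) ⟨i, hi⟩
    exact Subtype.ext (funext fun b => keyfs p q h' b.1 b.2)
  let σ : Q → P := Function.surjInv hesurj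
  have hσ : ∀ y : Q, e (σ y) = y := Function.surjInv_eq hesurj
  let toF : Q → Q := fun y => e (f (σ y))
  let invF : Q → Q := fun y => e (f.symm (σ y))
  have htoF : ∀ p : P, toF (e p) = e (f p) := fun p => ekey (σ (e p)) p (hσ (e p))
  have hinvF : ∀ p : P, invF (e p) = e (f.symm p) := fun p => ekeys (σ (e p)) p (hσ (e p))
  have hli : Function.LeftInverse invF toF := by
    intro y
    obtain ⟨p, rfl⟩ := hesurj y
    rw [htoF, hinvF, f.symm_apply_apply]
  have hri : Function.RightInverse invF toF := by
    intro y
    obtain ⟨p, rfl⟩ := hesurj y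
    rw [hinvF, htoF, f.apply_symm_apply]
  have hcontToF : Continuous toF := by
    rw [hq.continuous_iff]
    have : toF ∘ e = e ∘ f := funext htoF
    rw [this]
    exact hecont.comp f.continuous
  have hcontInvF : Continuous invF := by
    rw [hq.continuous_iff]
    have : invF ∘ e = e ∘ f.symm := funext hinvF
    rw [this]
    exact hecont.comp f.symm.continuous
  refine ⟨⟨⟨toF, invF, hli, hri⟩, hcontToF, hcontInvF⟩, ?_⟩
  intro p
  have : toF (e p) = e (f p) := htoF p
  exact congrArg Subtype.val this
end

section
/- Let X = ∏_{α∈A} X_α be a product of nonempty compact metric spaces, P ⊆ X closed, and f : P → P a homeomorphism with f(P^{(κ)}) = P^{(κ)} for every cardinal κ. Let λ < μ be infinite cardinals, let C ⊆ A be an f-admissible set of cardinality λ with π_C^{-1}(P_C^{(λ)}) = P^{(λ)} (where P_C^{(λ)} = π_C(P^{(λ)})), and let B ⊆ A be an f-admissible set of cardinality μ containing C such that: π_B^{-1}(π_B(P^{(μ)})) = P^{(μ)}; every compact set F ⊆ P_B ∖ π_B(P^{(λ)}) is μ-negligible in X_B; and every α ∈ B is contained in a countable f-admissible set B(α) ⊆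 B. Then for any σ-compact set F ⊆ P_C ∖ P_C^{(λ)} and any f-admissible set Γ ⊆ B containing C with Γ∖C countable, there exists an f-admissible set Λ with Γ ⊆ Λ ⊆ B such that Λ∖C is countable and for all x ∈ F the sets π^Λ_{Λ∖C}((π^Λ_C)^{-1}(x) ∩ P_Λ) and π^Λ_{Λ∖C}((π^Λ_C)^{-1}(f_C(x)) ∩ P_Λ) are nowhere dense in X_{Λ∖C}, where f_C is the homeomorphism of P_C induced by f and π^Λ_C : X_Λ → X_C, π^Λ_{Λ∖C} : X_Λ → X_{Λ∖C} are the projections. -/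
universe u
open Topology TopologicalSpace

open Set

/-- The projection of a partial product indexed by `B` onto the one indexed by `C ⊆ B`. -/
def projRes {I : Type u} {X : I → Type u} {B C : Set I} (h : C ⊆ B) (y : ∀ b : B, X b) :
    ∀ c : C, X c := fun c => y ⟨c.1, h c.2⟩

/-- The projection of a partial product indexed by `B` onto the one indexed by `B \ C`. -/
def projDiff {I : Type u} {X : I → Type u} {B C : Set I} (y : ∀ b : B, X b) :
    ∀ d : (B \ C : Set I), X d := fun d => y ⟨d.1, d.2.1⟩

/-- The `λ`-interior of a set `P` in a topological space `Z`: for infinite `λ`, the set of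
points `x ∈ P` that are contained in a `G_λ`-subset (an intersection of at most `λ` open sets)
of `Z` lying inside `P`; for finite `λ`, the ordinary interior of `P`. -/
def lamInterior {Z : Type u} [TopologicalSpace Z] (lam : Cardinal.{u}) (P : Set Z) : Set Z :=
  if lam < Cardinal.aleph0 then interior P
  else {x | x ∈ P ∧ ∃ K : Set Z,
    (∃ S : Set (Set Z), (∀ U ∈ S, IsOpen U) ∧ Cardinal.mk S ≤ lam ∧ K = ⋂₀ S) ∧ x ∈ K ∧ K ⊆ P}

/-- A set `Q` is `μ`-negligible in `Z` if its `λ`-interior is empty for every `λ < μ`. -/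
def IsNegligible {Z : Type u} [TopologicalSpace Z] (μ : Cardinal.{u}) (Q : Set Z) : Prop :=
  ∀ lam < μ, lamInterior lam Q = ∅

/-- The image of a subset `S` of the ambient space under a homeomorphism `f : P ≃ₜ K`
between subspaces, i.e. `f(S ∩ P)` viewed in the ambient space of `K`. -/
def imageOn {Z W : Type u} [TopologicalSpace Z] [TopologicalSpace W] {P : Set Z} {K : Set W}
    (f : P ≃ₜ K) (S : Set Z) : Set W :=
  Subtype.val '' (⇑f '' (Subtype.val ⁻¹' S))

section Adm
variable {I : Type u} {X : I → Type u} [∀ i, TopologicalSpace (X i)]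
  {P : Set (∀ i, X i)}

/-- factoring condition -/
def Factors (P : Set (∀ i, X i)) (g : P → P) (S : Set I) : Prop :=
  ∀ p q : P, proj S p.1 = proj S q.1 → proj S (g p).1 = proj S (g q).1

theorem continuous_proj (B : Set I) : Continuous (proj (X := X) B) :=
  continuous_pi fun b => continuous_apply b.1

theorem continuous_projRes {B C : Set I} (h : C ⊆ B) : Continuous (projRes (X := X) h) :=
  continuous_pi fun c => continuous_apply _

theorem projRes_proj {B C : Set I} (h : C ⊆ B) (x : ∀ i, X i) :
    projRes h (proj B x) = proj C x := rfl

theorem factors_of_isAdmissible (f : P ≃ₜ P) (S : Set I) (h : IsAdmissible P f S) :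
    Factors P f S ∧ Factors P f.symm S := by
  obtain ⟨fB, hfB⟩ := h
  constructor
  · intro p q hpq
    have h1 := hfB p
    have h2 := hfB q
    rw [show (⟨proj S p.1, ⟨p.1, p.2, rfl⟩⟩ : (proj S '' P : Set _)) = ⟨proj S q.1, ⟨q.1, q.2, rfl⟩⟩
      from Subtype.ext hpq] at h1
    rw [← h1, ← h2]
  · intro p q hpq
    have h1 := hfB (f.symm p)
    have h2 := hfB (f.symm q)
    rw [f.apply_symm_apply] at h1 h2
    have : (fB ⟨proj S (f.symm p).1, ⟨_, (f.symm p).2, rfl⟩⟩) =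
        (fB ⟨proj S (f.symm q).1, ⟨_, (f.symm q).2, rfl⟩⟩) :=
      Subtype.ext (by rw [h1, h2]; exact hpq)
    have := fB.injective this
    exact congrArg Subtype.val this

variable [∀ i, Nonempty (X i)]

theorem isAdmissible_of_factors [∀ i, T2Space (X i)] [CompactSpace (∀ i, X i)]
    (hP : IsClosed P) (f : P ≃ₜ P) (S : Set I)
    (h1 : Factors P f S) (h2 : Factors P f.symm S) : IsAdmissible P f S := by
  haveI : CompactSpace P := isCompact_iff_compactSpace.mp hP.isCompact
  set PS := (proj S '' P : Set (∀ b : S, X b)) with hPS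
  let π : P → PS := fun p => ⟨proj S p.1, ⟨p.1, p.2, rfl⟩⟩
  have hπc : Continuous π := Continuous.subtype_mk ((continuous_proj S).comp continuous_subtype_val) _
  have hπs : Function.Surjective π := by
    rintro ⟨y, p, hp, rfl⟩; exact ⟨⟨p, hp⟩, rfl⟩
  have hq : IsQuotientMap π := (hπc.isClosedMap).isQuotientMap hπc hπs
  -- descend a map g : P → P satisfying Factors to a map PS → PS
  have key : ∀ (g : P → P), Factors P g S → ∃ G : PS → PS, ∀ p : P, G (π p) = π (g p) := by
    intro g hg
    refine ⟨fun y => π (g (hπs y).choose), fun p => ?_⟩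
    have h := (hπs (π p)).choose_spec
    have : proj S ((hπs (π p)).choose).1 = proj S p.1 := congrArg Subtype.val h
    exact show π (g (hπs (π p)).choose) = π (g p) from Subtype.ext (hg _ _ this)
  obtain ⟨G, hG⟩ := key f h1
  obtain ⟨G', hG'⟩ := key f.symm h2
  have hGc : Continuous G := hq.continuous_iff.mpr (by
    have : G ∘ π = π ∘ f := funext fun p => hG p
    rw [this]; exact hπc.comp f.continuous)
  have hG'c : Continuous G' := hq.continuous_iff.mpr (by
    have : G' ∘ π = π ∘ f.symm := funext fun p => hG' p
    rw [this]; exact hπc.comp f.symm.continuous)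
  have hleft : ∀ y, G' (G y) = y := by
    intro y
    obtain ⟨p, rfl⟩ := hπs y
    rw [hG, hG', f.symm_apply_apply]
  have hright : ∀ y, G (G' y) = y := by
    intro y
    obtain ⟨p, rfl⟩ := hπs y
    rw [hG', hG, f.apply_symm_apply]
  exact ⟨⟨⟨G, G', hleft, hright⟩, hGc, hG'c⟩, fun p => congrArg Subtype.val (hG p)⟩

theorem isAdmissible_sUnion [∀ i, T2Space (X i)] [CompactSpace (∀ i, X i)]
    (hP : IsClosed P) (f : P ≃ₜ P) (𝒮 : Set (Set I))
    (h : ∀ S ∈ 𝒮, IsAdmissible P f S) : IsAdmissible P f (⋃₀ 𝒮) := by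
  have key : ∀ (g : P → P), (∀ S ∈ 𝒮, Factors P g S) → Factors P g (⋃₀ 𝒮) := by
    intro g hg p q hpq
    funext a
    obtain ⟨S, hS, haS⟩ := a.2
    have : proj S p.1 = proj S q.1 := by
      funext b
      exact congrFun hpq ⟨b.1, S, hS, b.2⟩
    exact congrFun (hg S hS p q this) ⟨a.1, haS⟩
  exact isAdmissible_of_factors hP f _
    (key f fun S hS => (factors_of_isAdmissible f S (h S hS)).1)
    (key f.symm fun S hS => (factors_of_isAdmissible f S (h S hS)).2)

end Adm


section Core
variable {I : Type u} {X : I → Type u} [∀ i, MetricSpace (X i)]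
  [∀ i, CompactSpace (X i)] [∀ i, Nonempty (X i)]

theorem continuous_projRes' {B C : Set I} (h : C ⊆ B) : Continuous (projRes (X := X) h) :=
  continuous_pi fun _ => continuous_apply _

/-- The fiber over `x` of the projection of `P_B` to `P_C`. -/
def Kfib (P : Set (∀ i, X i)) {B C : Set I} (hCB : C ⊆ B) (x : ∀ c : C, X c) :
    Set (∀ b : B, X b) :=
  (proj B '' P) ∩ (projRes hCB) ⁻¹' {x}

theorem Kfib_compact {P : Set (∀ i, X i)} (hP : IsClosed P) {B C : Set I} (hCB : C ⊆ B)
    (x : ∀ c : C, X c) : IsCompact (Kfib P hCB x) :=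
  IsCompact.inter_right (hP.isCompact.image (continuous_pi fun b => continuous_apply b.1))
    (isClosed_singleton.preimage (continuous_projRes' hCB))

/-- Monotonicity of non-inclusion of cylinders into fiber projections. -/
theorem notSubset_mono {B D D' D'' : Set I} (h1 : D ⊆ D') (h2 : D' ⊆ D'')
    (hD'B : D' ⊆ B) (hD''B : D'' ⊆ B)
    (V : Set (∀ d : D, X d)) (K : Set (∀ b : B, X b))
    (h : ¬ (projRes h1 ⁻¹' V ⊆ projRes hD'B '' K)) :
    ¬ (projRes (h1.trans h2) ⁻¹' V ⊆ projRes hD''B '' K) := by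
  classical
  intro hsub
  apply h
  intro z hz
  let z'' : ∀ d : D'', X d := fun d =>
    if hd : d.1 ∈ D' then z ⟨d.1, hd⟩ else Classical.arbitrary _
  have hz'' : projRes (h1.trans h2) z'' = projRes h1 z := by
    funext c
    show z'' ⟨c.1, h2 (h1 c.2)⟩ = z ⟨c.1, h1 c.2⟩
    simp only [z'']
    rw [dif_pos (h1 c.2)]
  have hmem : z'' ∈ projRes (h1.trans h2) ⁻¹' V := by
    rw [mem_preimage, hz'']; exact hz
  obtain ⟨k, hk, hkz⟩ := hsub hmem
  refine ⟨k, hk, ?_⟩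
  funext c
  have h3 := congrFun hkz ⟨c.1, h2 c.2⟩
  show k ⟨c.1, hD'B c.2⟩ = z c
  have : z'' ⟨c.1, h2 c.2⟩ = z c := by simp only [z'']; rw [dif_pos c.2]
  rw [← this, ← h3]; rfl

/-- Pointwise key lemma. -/
theorem pointwise_false {P : Set (∀ i, X i)} (hP : IsClosed P)
    {lam μ : Cardinal.{u}} (hlam : Cardinal.aleph0 ≤ lam) (hlamμ : lam < μ)
    {B C : Set I} (hCB : C ⊆ B) (hCcard : Cardinal.mk C = lam)
    (hBneg : ∀ F : Set (∀ b : B, X b), IsCompact F →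
      F ⊆ (proj B '' P) \ (proj B '' lamInterior lam P) → IsNegligible μ F)
    {x : ∀ c : C, X c} (hx : x ∉ proj C '' lamInterior lam P)
    {D : Set I} (hD : D.Countable) (hDBC : D ⊆ B \ C)
    {V : Set (∀ d : D, X d)} (hV : IsOpen V) (hVne : V.Nonempty)
    (hall : ∀ (D' : Set I) (_ : D'.Countable) (hDD' : D ⊆ D') (hD'BC : D' ⊆ B \ C),
      projRes hDD' ⁻¹' V ⊆
        projRes (fun i hi => (hD'BC hi).1) '' Kfib P hCB x) : False := by
  classical
  set K := Kfib P hCB x with hK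
  have hKc : IsCompact K := Kfib_compact hP hCB x
  have hKsub : K ⊆ (proj B '' P) \ (proj B '' lamInterior lam P) := by
    rintro y ⟨hy1, hy2⟩
    refine ⟨hy1, fun hcon => ?_⟩
    obtain ⟨p, hp, rfl⟩ := hcon
    exact hx ⟨p, hp, hy2.symm ▸ rfl⟩
  have hKneg : lamInterior lam K = ∅ := hBneg K hKc hKsub lam hlamμ
  obtain ⟨v, hv⟩ := hVne
  have hDB : D ⊆ B := fun i hi => (hDBC hi).1
  -- the G_lam set
  let O : Set (∀ b : B, X b) := (projRes hDB) ⁻¹' V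
  let g : ↑C × ULift.{u} ℕ → Set (∀ b : B, X b) := fun cn =>
    (fun y : ∀ b : B, X b => y ⟨cn.1.1, hCB cn.1.2⟩) ⁻¹'
      Metric.ball (x cn.1) (1 / (cn.2.down + 1))
  let SS : Set (Set (∀ b : B, X b)) := insert O (Set.range g)
  have hSSopen : ∀ U ∈ SS, IsOpen U := by
    intro U hU
    simp only [SS, mem_insert_iff, mem_range] at hU
    rcases hU with rfl | ⟨cn, rfl⟩
    · exact hV.preimage (continuous_projRes' hDB)
    · exact Metric.isOpen_ball.preimage (continuous_apply (⟨cn.1.1, hCB cn.1.2⟩ : ↑B))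
  have hSScard : Cardinal.mk SS ≤ lam := by
    calc Cardinal.mk SS ≤ Cardinal.mk (Set.range g) + 1 := Cardinal.mk_insert_le
    _ ≤ Cardinal.mk (↑C × ULift.{u} ℕ) + 1 := by
        exact add_le_add Cardinal.mk_range_le le_rfl
    _ = lam * Cardinal.aleph0 + 1 := by
        rw [Cardinal.mk_prod]; simp [hCcard]
    _ = lam := by rw [Cardinal.mul_aleph0_eq hlam, Cardinal.add_one_eq hlam]
  have hmem_iff : ∀ y : ∀ b : B, X b, y ∈ ⋂₀ SS ↔ (y ∈ O ∧ ∀ cn, y ∈ g cn) := by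
    intro y
    simp only [SS, mem_sInter, mem_insert_iff, forall_eq_or_imp, mem_range,
      forall_exists_index]
    constructor
    · rintro ⟨h1, h2⟩; exact ⟨h1, fun cn => h2 _ cn rfl⟩
    · rintro ⟨h1, h2⟩; exact ⟨h1, fun _ cn h => h ▸ h2 cn⟩
  -- points of the G_lam set have the right C coordinates
  have key1 : ∀ y ∈ ⋂₀ SS, ∀ c : C, y ⟨c.1, hCB c.2⟩ = x c := by
    intro y hy c
    have hg := (hmem_iff y).1 hy |>.2
    refine eq_of_dist_eq_zero (le_antisymm ?_ dist_nonneg)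
    by_contra hlt
    push_neg at hlt
    obtain ⟨n, hn⟩ := exists_nat_one_div_lt hlt
    have := hg (c, ULift.up n)
    simp only [g, mem_preimage, Metric.mem_ball] at this
    exact absurd this (not_lt.mpr (le_of_lt hn))
  -- the G_lam set is contained in K
  have key2 : ⋂₀ SS ⊆ K := by
    intro y hy
    obtain ⟨hyO, hyg⟩ := (hmem_iff y).1 hy
    let ι := {E : Set I // E.Countable ∧ D ⊆ E ∧ E ⊆ B \ C}
    haveI : Nonempty ι := ⟨⟨D, hD, subset_rfl, hDBC⟩⟩
    let T : ι → Set (∀ b : B, X b) := fun E =>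
      K ∩ (projRes (fun i hi => (E.2.2.2 hi).1) ⁻¹' {projRes (fun i hi => (E.2.2.2 hi).1) y})
    have hTne : ∀ E, (T E).Nonempty := by
      intro E
      have hcyl : projRes (fun i hi => (E.2.2.2 hi).1) y ∈ projRes E.2.2.1 ⁻¹' V := by
        show projRes E.2.2.1 (projRes _ y) ∈ V
        exact hyO
      obtain ⟨k, hk, hkeq⟩ := hall E.1 E.2.1 E.2.2.1 E.2.2.2 hcyl
      exact ⟨k, hk, by rw [mem_preimage, hkeq]; rfl⟩
    have hTc : ∀ E, IsCompact (T E) :=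
      fun E => hKc.inter_right (isClosed_singleton.preimage (continuous_projRes' _))
    have hTcl : ∀ E, IsClosed (T E) :=
      fun E => (hKc.isClosed).inter (isClosed_singleton.preimage (continuous_projRes' _))
    have hTd : Directed (· ⊇ ·) T := by
      intro i j
      refine ⟨⟨i.1 ∪ j.1, i.2.1.union j.2.1, i.2.2.1.trans subset_union_left,
        union_subset i.2.2.2 j.2.2.2⟩, ?_, ?_⟩ <;>
      · rintro k ⟨hk1, hk2⟩
        refine ⟨hk1, ?_⟩
        rw [mem_preimage, mem_singleton_iff] at hk2 ⊢
        funext c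
        exact congrFun hk2 ⟨c.1, by first | exact subset_union_left c.2 | exact subset_union_right c.2⟩
    obtain ⟨k, hk⟩ := IsCompact.nonempty_iInter_of_directed_nonempty_isCompact_isClosed
      T hTd hTne hTc hTcl
    have hkK : k ∈ K := (mem_iInter.1 hk ⟨D, hD, subset_rfl, hDBC⟩).1
    have hky : k = y := by
      funext b
      by_cases hbC : b.1 ∈ C
      · have h1 : projRes hCB k = x := hkK.2
        have h2 := congrFun h1 ⟨b.1, hbC⟩
        have h3 := key1 y hy ⟨b.1, hbC⟩
        show k b = y b
        calc k b = k ⟨b.1, hCB hbC⟩ := rfl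
        _ = x ⟨b.1, hbC⟩ := h2
        _ = y ⟨b.1, hCB hbC⟩ := h3.symm
        _ = y b := rfl
      · have hbBC : b.1 ∈ B \ C := ⟨b.2, hbC⟩
        have hE : (D ∪ {b.1} : Set I).Countable := hD.union (countable_singleton _)
        have hE2 : D ⊆ D ∪ {b.1} := subset_union_left
        have hE3 : (D ∪ {b.1} : Set I) ⊆ B \ C :=
          union_subset hDBC (singleton_subset_iff.2 hbBC)
        have := (mem_iInter.1 hk ⟨D ∪ {b.1}, hE, hE2, hE3⟩).2
        rw [mem_preimage, mem_singleton_iff] at this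
        have h4 := congrFun this ⟨b.1, subset_union_right rfl⟩
        exact h4
    exact hky ▸ hkK
  -- construct a point of the G_lam set
  let y₀ : ∀ b : B, X b := fun b =>
    if hb : b.1 ∈ C then x ⟨b.1, hb⟩
    else if hd : b.1 ∈ D then v ⟨b.1, hd⟩ else Classical.arbitrary _
  have hy₀ : y₀ ∈ ⋂₀ SS := by
    rw [hmem_iff]
    constructor
    · show projRes hDB y₀ ∈ V
      have : projRes hDB y₀ = v := by
        funext d
        show y₀ ⟨d.1, hDB d.2⟩ = v d
        simp only [y₀]
        rw [dif_neg (hDBC d.2).2, dif_pos d.2]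
      rw [this]; exact hv
    · intro cn
      simp only [g, mem_preimage, Metric.mem_ball]
      have : y₀ ⟨cn.1.1, hCB cn.1.2⟩ = x cn.1 := by
        simp only [y₀]; rw [dif_pos cn.1.2]
      rw [this, dist_self]
      positivity
  have : y₀ ∈ lamInterior lam K := by
    rw [lamInterior, if_neg (not_lt.mpr hlam)]
    exact ⟨key2 hy₀, ⋂₀ SS, ⟨SS, hSSopen, hSScard, rfl⟩, hy₀, key2⟩
  rw [hKneg] at this
  exact this


/-- Uniform key lemma: one countable extension works for all points of a compact set. -/
theorem uniform_exists {P : Set (∀ i, X i)} (hP : IsClosed P)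
    {lam μ : Cardinal.{u}} (hlam : Cardinal.aleph0 ≤ lam) (hlamμ : lam < μ)
    {B C : Set I} (hCB : C ⊆ B) (hCcard : Cardinal.mk C = lam)
    (hBneg : ∀ F : Set (∀ b : B, X b), IsCompact F →
      F ⊆ (proj B '' P) \ (proj B '' lamInterior lam P) → IsNegligible μ F)
    {F' : Set (∀ c : C, X c)} (hF'c : IsCompact F')
    (hF'sub : F' ⊆ (proj C '' P) \ (proj C '' lamInterior lam P))
    {D : Set I} (hD : D.Countable) (hDBC : D ⊆ B \ C)
    {V : Set (∀ d : D, X d)} (hV : IsOpen V) (hVne : V.Nonempty) :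
    ∃ (D' : Set I) (_ : D'.Countable) (hDD' : D ⊆ D') (hD'BC : D' ⊆ B \ C),
      ∀ x ∈ F', ¬ (projRes hDD' ⁻¹' V ⊆
        projRes (fun i hi => (hD'BC hi).1) '' Kfib P hCB x) := by
  by_contra hcon
  push_neg at hcon
  -- for each countable D' there is a bad point x ∈ F'
  have hbad : ∀ (E : Set I) (_ : E.Countable) (hDE : D ⊆ E) (hEBC : E ⊆ B \ C),
      ∃ x ∈ F', projRes hDE ⁻¹' V ⊆ projRes (fun i hi => (hEBC hi).1) '' Kfib P hCB x := by
    intro E hE hDE hEBC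
    obtain ⟨x, hx1, hx2⟩ := hcon E hE hDE hEBC
    exact ⟨x, hx1, hx2⟩
  let ι := {E : Set I // E.Countable ∧ D ⊆ E ∧ E ⊆ B \ C}
  haveI : Nonempty ι := ⟨⟨D, hD, subset_rfl, hDBC⟩⟩
  let A : ι → Set (∀ c : C, X c) := fun E =>
    F' ∩ {x | projRes E.2.2.1 ⁻¹' V ⊆ projRes (fun i hi => (E.2.2.2 hi).1) '' Kfib P hCB x}
  have hPBc : IsCompact (proj B '' P) :=
    hP.isCompact.image (continuous_pi fun b => continuous_apply b.1)
  have hAeq : ∀ E : ι, A E = F' ∩ ⋂ z ∈ projRes E.2.2.1 ⁻¹' V,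
      (projRes hCB) '' ((proj B '' P) ∩ (projRes (fun i hi => (E.2.2.2 hi).1)) ⁻¹' {z}) := by
    intro E
    ext x
    simp only [A, mem_inter_iff, mem_setOf_eq, mem_iInter]
    refine and_congr_right fun _ => ⟨fun h z hz => ?_, fun h z hz => ?_⟩
    · obtain ⟨k, ⟨hk1, hk2⟩, hk3⟩ := h hz
      exact ⟨k, ⟨hk1, hk3⟩, hk2⟩
    · obtain ⟨k, ⟨hk1, hk2⟩, hk3⟩ := h z hz
      exact ⟨k, ⟨hk1, hk3⟩, hk2⟩
  have hAcl : ∀ E : ι, IsClosed (A E) := by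
    intro E
    rw [hAeq E]
    refine (hF'c.isClosed).inter (isClosed_biInter fun z _ => ?_)
    exact (IsCompact.image (hPBc.inter_right
      (isClosed_singleton.preimage (continuous_projRes' _))) (continuous_projRes' hCB)).isClosed
  have hAc : ∀ E : ι, IsCompact (A E) :=
    fun E => hF'c.of_isClosed_subset (hAcl E) inter_subset_left
  have hAne : ∀ E : ι, (A E).Nonempty := by
    intro E
    obtain ⟨x, hx1, hx2⟩ := hbad E.1 E.2.1 E.2.2.1 E.2.2.2
    exact ⟨x, hx1, hx2⟩
  have hAmono : ∀ (i j : ι), i.1 ⊆ j.1 → A j ⊆ A i := by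
    rintro i j hij x ⟨hx1, hx2⟩
    refine ⟨hx1, ?_⟩
    by_contra hni
    exact notSubset_mono i.2.2.1 hij (fun a ha => (i.2.2.2 ha).1)
      (fun a ha => (j.2.2.2 ha).1) V (Kfib P hCB x) hni hx2
  have hAd : Directed (· ⊇ ·) A := by
    intro i j
    refine ⟨⟨i.1 ∪ j.1, i.2.1.union j.2.1, i.2.2.1.trans subset_union_left,
      union_subset i.2.2.2 j.2.2.2⟩, ?_, ?_⟩
    · exact hAmono i _ subset_union_left
    · exact hAmono j _ subset_union_right
  obtain ⟨x, hx⟩ := IsCompact.nonempty_iInter_of_directed_nonempty_isCompact_isClosed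
    A hAd hAne hAc hAcl
  have hxF' : x ∈ F' := (mem_iInter.1 hx ⟨D, hD, subset_rfl, hDBC⟩).1
  refine pointwise_false hP hlam hlamμ hCB hCcard hBneg (hF'sub hxF').2 hD hDBC hV hVne ?_
  intro E hE hDE hEBC
  exact (mem_iInter.1 hx ⟨E, hE, hDE, hEBC⟩).2


/-- One closing-off step: extend `D` to handle all basic open sets of `X_D`. -/
theorem step_exists {P : Set (∀ i, X i)} (hP : IsClosed P)
    {lam μ : Cardinal.{u}} (hlam : Cardinal.aleph0 ≤ lam) (hlamμ : lam < μ)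
    {B C : Set I} (hCB : C ⊆ B) (hCcard : Cardinal.mk C = lam)
    (hBneg : ∀ F : Set (∀ b : B, X b), IsCompact F →
      F ⊆ (proj B '' P) \ (proj B '' lamInterior lam P) → IsNegligible μ F)
    (F'seq : ℕ → Set (∀ c : C, X c)) (hF'c : ∀ m, IsCompact (F'seq m))
    (hF'sub : ∀ m, F'seq m ⊆ (proj C '' P) \ (proj C '' lamInterior lam P))
    {D : Set I} (hD : D.Countable) (hDBC : D ⊆ B \ C) :
    ∃ (D' : Set I) (_ : D'.Countable) (_ : D ⊆ D') (_ : D' ⊆ B \ C),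
      ∃ 𝔅 : Set (Set (∀ d : D, X d)), IsTopologicalBasis 𝔅 ∧
        ∀ (m : ℕ) (V : Set (∀ d : D, X d)), V ∈ 𝔅 → V.Nonempty → ∀ x ∈ F'seq m,
          ∀ (hDD' : D ⊆ D') (hD'B : D' ⊆ B),
          ¬ (projRes hDD' ⁻¹' V ⊆ projRes hD'B '' Kfib P hCB x) := by
  haveI : Countable ↥D := hD.to_subtype
  set 𝔅 := countableBasis (∀ d : D, X d) with h𝔅
  have hchoice : ∀ (m : ℕ) (V : Set (∀ d : D, X d)),
      ∃ (E : Set I) (_ : E.Countable) (hDE : D ⊆ E) (hEBC : E ⊆ B \ C),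
        (V ∈ 𝔅 → V.Nonempty → ∀ x ∈ F'seq m,
          ¬ (projRes hDE ⁻¹' V ⊆ projRes (fun i hi => (hEBC hi).1) '' Kfib P hCB x)) := by
    intro m V
    by_cases h : V ∈ 𝔅 ∧ V.Nonempty
    · obtain ⟨D', hc, h1, h2, h3⟩ := uniform_exists hP hlam hlamμ hCB hCcard hBneg
        (hF'c m) (hF'sub m) hD hDBC ((isBasis_countableBasis _).isOpen h.1) h.2
      exact ⟨D', hc, h1, h2, fun _ _ x hx => h3 x hx⟩
    · refine ⟨D, hD, subset_rfl, hDBC, fun h1 h2 => absurd ⟨h1, h2⟩ h⟩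
  choose Efun hE1 hE2 hE3 hE4 using hchoice
  refine ⟨D ∪ ⋃ (m : ℕ), ⋃ (V ∈ 𝔅), Efun m V,
    hD.union (countable_iUnion fun m =>
      (countable_countableBasis _).biUnion fun V _ => hE1 m V),
    subset_union_left,
    union_subset hDBC (iUnion_subset fun m => iUnion₂_subset fun V _ => hE3 m V),
    𝔅, isBasis_countableBasis _, ?_⟩
  intro m V hV𝔅 hVne x hx hDD' hD'B
  have hEsub : Efun m V ⊆ D ∪ ⋃ (m : ℕ), ⋃ (V ∈ 𝔅), Efun m V := by
    intro a ha
    exact subset_union_right (mem_iUnion.2 ⟨m, mem_iUnion₂.2 ⟨V, hV𝔅, ha⟩⟩)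
  exact notSubset_mono (hE2 m V) hEsub (fun i hi => (hE3 m V hi).1) hD'B V
    (Kfib P hCB x) (hE4 m V hV𝔅 hVne x hx)

end Core


/-- Lemma 2.5 of the paper. -/
theorem stmt5 {I : Type u} {X : I → Type u} [∀ i, MetricSpace (X i)]
    [∀ i, CompactSpace (X i)] [∀ i, Nonempty (X i)]
    (P : Set (∀ i, X i)) (hP : IsClosed P) (f : P ≃ₜ P)
    (hf : ∀ κ : Cardinal.{u}, imageOn f (lamInterior κ P) = lamInterior κ P)
    (lam μ : Cardinal.{u}) (hlam : Cardinal.aleph0 ≤ lam) (hlamμ : lam < μ)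
    -- the `f`-admissible set `C` of cardinality `λ`, with its induced homeomorphism `f_C`
    (C : Set I) (hCcard : Cardinal.mk C = lam)
    (fC : (proj C '' P : Set (∀ c : C, X c)) ≃ₜ (proj C '' P : Set (∀ c : C, X c)))
    (hfC : ∀ p : P, (fC ⟨proj C p.1, ⟨p.1, p.2, rfl⟩⟩).1 = proj C (f p).1)
    (hCsat : proj C ⁻¹' (proj C '' lamInterior lam P) = lamInterior lam P)
    -- the `f`-admissible set `B` of cardinality `μ` containing `C`
    (B : Set I) (hCB : C ⊆ B) (hBadm : IsAdmissible P f B) (hBcard : Cardinal.mk B = μ)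
    (hBsat : proj B ⁻¹' (proj B '' lamInterior μ P) = lamInterior μ P)
    (hBneg : ∀ F : Set (∀ b : B, X b), IsCompact F →
      F ⊆ (proj B '' P) \ (proj B '' lamInterior lam P) → IsNegligible μ F)
    (hBctble : ∀ α ∈ B, ∃ Bα : Set I, α ∈ Bα ∧ Bα.Countable ∧ Bα ⊆ B ∧ IsAdmissible P f Bα)
    -- a `σ`-compact set `F ⊆ P_C ∖ P_C^{(λ)}`
    (F : Set (∀ c : C, X c)) (hFσ : IsSigmaCompact F)
    (hFsub : F ⊆ (proj C '' P) \ (proj C '' lamInterior lam P))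
    -- an `f`-admissible set `Γ ⊆ B` containing `C` with `Γ ∖ C` countable
    (Γ : Set I) (hCΓ : C ⊆ Γ) (hΓB : Γ ⊆ B) (hΓadm : IsAdmissible P f Γ)
    (hΓctble : (Γ \ C).Countable) :
    ∃ Λ : Set I, ∃ hΓΛ : Γ ⊆ Λ, Λ ⊆ B ∧ IsAdmissible P f Λ ∧ (Λ \ C).Countable ∧
      ∀ x, ∀ hx : x ∈ F,
        IsNowhereDense (projDiff (C := C) ''
          ({y : ∀ b : Λ, X b | projRes (hCΓ.trans hΓΛ) y = x} ∩ proj Λ '' P)) ∧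
        IsNowhereDense (projDiff (C := C) ''
          ({y : ∀ b : Λ, X b | projRes (hCΓ.trans hΓΛ) y = (fC ⟨x, (hFsub hx).1⟩).1} ∩
            proj Λ '' P)) := by
  classical
  -- elementary facts about the λ-interior
  have hlamInt_subP : lamInterior lam P ⊆ P := by
    rw [lamInterior, if_neg (not_lt.mpr hlam)]
    exact fun x hx => hx.1
  -- invariance of the λ-interior under f and f.symm
  have hfS : ⇑f '' (Subtype.val ⁻¹' lamInterior lam P) =
      Subtype.val ⁻¹' lamInterior lam P := by
    have h := hf lam
    rw [imageOn] at h
    ext a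
    constructor
    · intro ha
      show a.1 ∈ lamInterior lam P
      rw [← h]; exact ⟨a, ha, rfl⟩
    · intro ha
      have h2 : a.1 ∈ Subtype.val '' (⇑f '' (Subtype.val ⁻¹' lamInterior lam P)) := by
        rw [h]; exact ha
      obtain ⟨b, hb, hba⟩ := h2
      rwa [show a = b from Subtype.ext hba.symm]
  have hfMem : ∀ a : P, a.1 ∈ lamInterior lam P → (f a).1 ∈ lamInterior lam P := by
    intro a ha
    have : f a ∈ ⇑f '' (Subtype.val ⁻¹' lamInterior lam P) := ⟨a, ha, rfl⟩
    rw [hfS] at this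
    exact this
  have hfsymmMem : ∀ a : P, a.1 ∈ lamInterior lam P → (f.symm a).1 ∈ lamInterior lam P := by
    intro a ha
    have h2 : a ∈ ⇑f '' (Subtype.val ⁻¹' lamInterior lam P) := by rw [hfS]; exact ha
    obtain ⟨b, hb, hba⟩ := h2
    rw [← hba, f.symm_apply_apply]
    exact hb
  -- the symm version of hfC
  have hfCsymm : ∀ q : P, (fC.symm ⟨proj C q.1, ⟨q.1, q.2, rfl⟩⟩).1 = proj C (f.symm q).1 := by
    intro q
    have h1 := hfC (f.symm q)
    rw [f.apply_symm_apply] at h1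
    have h3 : fC ⟨proj C (f.symm q).1, ⟨(f.symm q).1, (f.symm q).2, rfl⟩⟩
        = ⟨proj C q.1, ⟨q.1, q.2, rfl⟩⟩ := Subtype.ext h1
    have h4 := congrArg fC.symm h3
    rw [fC.symm_apply_apply] at h4
    exact (congrArg Subtype.val h4).symm
  -- fC.symm preserves the projection of the λ-interior
  have hfCsymmMem : ∀ w : ↥(proj C '' P), w.1 ∈ proj C '' lamInterior lam P →
      (fC.symm w).1 ∈ proj C '' lamInterior lam P := by
    rintro ⟨w, hw⟩ ⟨p, hp, hpw⟩
    have hpP : p ∈ P := hlamInt_subP hp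
    have he : (⟨w, hw⟩ : ↥(proj C '' P)) = ⟨proj C p, ⟨p, hpP, rfl⟩⟩ := Subtype.ext hpw.symm
    rw [he, hfCsymm ⟨p, hpP⟩]
    exact ⟨(f.symm ⟨p, hpP⟩).1, hfsymmMem ⟨p, hpP⟩ hp, rfl⟩
  have havoid : ∀ (x : ∀ c : C, X c) (hx1 : x ∈ proj C '' P),
      x ∉ proj C '' lamInterior lam P →
      (fC ⟨x, hx1⟩).1 ∉ proj C '' lamInterior lam P := by
    intro x hx1 hx2 hcon
    have h2 := hfCsymmMem (fC ⟨x, hx1⟩) hcon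
    rw [fC.symm_apply_apply] at h2
    exact hx2 h2
  -- decompose F into compacts, and close under fC
  obtain ⟨Kc, hKcc, hKcover⟩ := hFσ
  have hKcF : ∀ m, Kc m ⊆ F := fun m => hKcover ▸ subset_iUnion Kc m
  have hPCc : IsCompact (proj C '' P) := hP.isCompact.image (continuous_proj C)
  haveI : CompactSpace ↥(proj C '' P) := isCompact_iff_compactSpace.mp hPCc
  have hImc : ∀ m, IsCompact (imageOn fC (Kc m)) := by
    intro m
    have h1 : IsCompact (Subtype.val ⁻¹' Kc m : Set ↥(proj C '' P)) :=
      (((hKcc m).isClosed).preimage continuous_subtype_val).isCompact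
    exact (h1.image fC.continuous).image continuous_subtype_val
  have hImsub : ∀ m, imageOn fC (Kc m) ⊆ (proj C '' P) \ (proj C '' lamInterior lam P) := by
    rintro m x ⟨w, ⟨a, ha, rfl⟩, rfl⟩
    refine ⟨(fC a).2, ?_⟩
    have haF := hFsub (hKcF m ha)
    have he : a = ⟨a.1, a.2⟩ := rfl
    exact he ▸ havoid a.1 a.2 haF.2
  set F'seq : ℕ → Set (∀ c : C, X c) := fun m => Kc m ∪ imageOn fC (Kc m) with hF'seq
  have hF'c : ∀ m, IsCompact (F'seq m) := fun m => (hKcc m).union (hImc m)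
  have hF'sub : ∀ m, F'seq m ⊆ (proj C '' P) \ (proj C '' lamInterior lam P) := by
    intro m x hx
    rcases hx with h | h
    · exact hFsub (hKcF m h)
    · exact hImsub m h
  -- admissible countable hulls
  have hBfun : ∀ α : I, ∃ Bα : Set I, α ∈ B →
      (α ∈ Bα ∧ Bα.Countable ∧ Bα ⊆ B ∧ IsAdmissible P f Bα) := by
    intro α
    by_cases h : α ∈ B
    · obtain ⟨Bα, h1, h2, h3, h4⟩ := hBctble α h
      exact ⟨Bα, fun _ => ⟨h1, h2, h3, h4⟩⟩
    · exact ⟨∅, fun h' => absurd h' h⟩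
  choose Bset hBset using hBfun
  -- the closing-off step
  have hstep : ∀ Dp : {D : Set I // D.Countable ∧ D ⊆ B \ C},
      ∃ D' : {D : Set I // D.Countable ∧ D ⊆ B \ C},
        Dp.1 ⊆ D'.1 ∧ (∀ α ∈ Dp.1, Bset α \ C ⊆ D'.1) ∧
        ∃ 𝔅 : Set (Set (∀ d : Dp.1, X d)), TopologicalSpace.IsTopologicalBasis 𝔅 ∧
          ∀ (m : ℕ) (V : Set (∀ d : Dp.1, X d)), V ∈ 𝔅 → V.Nonempty → ∀ x ∈ F'seq m,
            ∀ (hDD' : Dp.1 ⊆ D'.1) (hD'B : D'.1 ⊆ B),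
              ¬ (projRes hDD' ⁻¹' V ⊆ projRes hD'B '' Kfib P hCB x) := by
    rintro ⟨D, hDc, hDBC⟩
    obtain ⟨D0, hD0c, hDD0, hD0BC, 𝔅, h𝔅, hp0⟩ :=
      step_exists hP hlam hlamμ hCB hCcard hBneg F'seq hF'c hF'sub hDc hDBC
    have hBsetc : ∀ α ∈ D, (Bset α \ C).Countable :=
      fun α hα => ((hBset α (hDBC hα).1).2.1).mono diff_subset
    have hBsetBC : ∀ α ∈ D, Bset α \ C ⊆ B \ C :=
      fun α hα => diff_subset_diff_left (hBset α (hDBC hα).1).2.2.1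
    refine ⟨⟨D0 ∪ ⋃ α ∈ D, (Bset α \ C),
      hD0c.union (hDc.biUnion hBsetc),
      union_subset hD0BC (iUnion₂_subset hBsetBC)⟩,
      hDD0.trans subset_union_left,
      fun α hα a ha => subset_union_right (mem_biUnion hα ha),
      𝔅, h𝔅, ?_⟩
    intro m V hV hVne x hx hDD' hD'B
    exact notSubset_mono hDD0 subset_union_left (fun i hi => (hD0BC hi).1) hD'B V
      (Kfib P hCB x) (hp0 m V hV hVne x hx hDD0 (fun i hi => (hD0BC hi).1))
  choose stepf hstep1 hstep2 Bas hBas hprop using hstep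
  -- the increasing sequence of countable subsets of B \ C
  let D0 : {D : Set I // D.Countable ∧ D ⊆ B \ C} :=
    ⟨Γ \ C, hΓctble, diff_subset_diff_left hΓB⟩
  let Dseq : ℕ → {D : Set I // D.Countable ∧ D ⊆ B \ C} := fun n => stepf^[n] D0
  have hDseq_succ : ∀ n, Dseq (n + 1) = stepf (Dseq n) := fun n =>
    Function.iterate_succ_apply' stepf n D0
  have hDmono : Monotone (fun n => (Dseq n).1) := monotone_nat_of_le_succ (fun n => by
    show (Dseq n).1 ⊆ (Dseq (n + 1)).1
    rw [hDseq_succ n]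
    exact hstep1 (Dseq n))
  have hDinfc : (⋃ n, (Dseq n).1).Countable := countable_iUnion fun n => (Dseq n).2.1
  have hDinfBC : (⋃ n, (Dseq n).1) ⊆ B \ C := iUnion_subset fun n => (Dseq n).2.2
  -- the set Λ
  set Λ : Set I := ⋃₀ (insert C (insert Γ (Bset '' (⋃ n, (Dseq n).1)))) with hΛdef
  have hΛadm : IsAdmissible P f Λ := by
    apply isAdmissible_sUnion hP f
    intro S hS
    simp only [mem_insert_iff, mem_image] at hS
    rcases hS with rfl | rfl | ⟨α, hα, rfl⟩
    · exact ⟨fC, hfC⟩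
    · exact hΓadm
    · exact (hBset α (hDinfBC hα).1).2.2.2
  have hΓΛ : Γ ⊆ Λ := subset_sUnion_of_mem (mem_insert_of_mem _ (mem_insert _ _))
  have hΛB : Λ ⊆ B := by
    apply sUnion_subset
    intro S hS
    simp only [mem_insert_iff, mem_image] at hS
    rcases hS with rfl | rfl | ⟨α, hα, rfl⟩
    · exact hCB
    · exact hΓB
    · exact (hBset α (hDinfBC hα).1).2.2.1
  have hDinfΛ : (⋃ n, (Dseq n).1) ⊆ Λ \ C := by
    intro α hα
    refine ⟨⟨Bset α, ?_, (hBset α (hDinfBC hα).1).1⟩, (hDinfBC hα).2⟩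
    exact mem_insert_of_mem _ (mem_insert_of_mem _ (mem_image_of_mem _ hα))
  have hΛCsub : Λ \ C ⊆ ⋃ n, (Dseq n).1 := by
    rintro a ⟨haΛ, haC⟩
    obtain ⟨S, hS, haS⟩ := haΛ
    simp only [mem_insert_iff, mem_image] at hS
    rcases hS with rfl | rfl | ⟨α, hα, rfl⟩
    · exact absurd haS haC
    · exact mem_iUnion.2 ⟨0, ⟨haS, haC⟩⟩
    · obtain ⟨n, hn⟩ := mem_iUnion.1 hα
      have hsub : Bset α \ C ⊆ (Dseq (n + 1)).1 := by
        rw [hDseq_succ n]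
        exact hstep2 (Dseq n) α hn
      exact mem_iUnion.2 ⟨n + 1, hsub ⟨haS, haC⟩⟩
  have hΛCc : (Λ \ C).Countable := hDinfc.mono hΛCsub
  have hdiffB : Λ \ C ⊆ B := fun a ha => hΛB ha.1
  -- the main nowhere-density claim
  have hmain : ∀ (m : ℕ) (x' : ∀ c : C, X c), x' ∈ F'seq m →
      IsNowhereDense (projRes hdiffB '' Kfib P hCB x') := by
    intro m x' hx'
    have hNc : IsCompact (projRes hdiffB '' Kfib P hCB x') :=
      (Kfib_compact hP hCB x').image (continuous_projRes' hdiffB)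
    rw [hNc.isClosed.isNowhereDense_iff, eq_empty_iff_forall_notMem]
    intro z hz
    obtain ⟨J, u, hJu, hJsub⟩ := (isOpen_pi_iff.1 isOpen_interior) z hz
    have hni : ∀ i : ↥(Λ \ C), ∃ n, i.1 ∈ (Dseq n).1 := fun i => mem_iUnion.1 (hΛCsub i.2)
    choose nf hnf using hni
    have hJn : ∀ i ∈ J, i.1 ∈ (Dseq (J.sup nf)).1 :=
      fun i hi => hDmono (Finset.le_sup hi) (hnf i)
    set n := J.sup nf with hn
    have hDnΛ : (Dseq n).1 ⊆ Λ \ C := fun a ha => hDinfΛ (mem_iUnion.2 ⟨n, ha⟩)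
    -- the extension map and the open set W
    let ext : (∀ d : (Dseq n).1, X d) → (∀ i : ↥(Λ \ C), X i.1) := fun w i =>
      if h : i.1 ∈ (Dseq n).1 then w ⟨i.1, h⟩ else z i
    have hextc : Continuous ext := by
      apply continuous_pi
      intro i
      by_cases h : i.1 ∈ (Dseq n).1
      · simp only [ext, dif_pos h]
        exact continuous_apply _
      · simp only [ext, dif_neg h]
        exact continuous_const
    let W : Set (∀ d : (Dseq n).1, X d) := ext ⁻¹' ((↑J : Set ↥(Λ \ C)).pi u)
    have hWopen : IsOpen W :=
      (isOpen_set_pi J.finite_toSet (fun a ha => (hJu a ha).1)).preimage hextc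
    have hextz : ext (projRes hDnΛ z) = z := by
      funext i
      simp only [ext]
      by_cases h : i.1 ∈ (Dseq n).1
      · rw [dif_pos h]; rfl
      · rw [dif_neg h]
    have hw₀W : projRes hDnΛ z ∈ W := by
      show ext (projRes hDnΛ z) ∈ (↑J : Set ↥(Λ \ C)).pi u
      rw [hextz, mem_pi]
      intro i hi
      exact (hJu i hi).2
    have hWsub : projRes hDnΛ ⁻¹' W ⊆ interior (projRes hdiffB '' Kfib P hCB x') := by
      intro y hy
      apply hJsub
      have hy' : ext (projRes hDnΛ y) ∈ (↑J : Set ↥(Λ \ C)).pi u := hy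
      rw [mem_pi] at hy'
      rw [mem_pi]
      intro i hi
      have h1 : ext (projRes hDnΛ y) i = y i := by
        simp only [ext]
        rw [dif_pos (hJn i hi)]
        rfl
      rw [← h1]
      exact hy' i hi
    haveI : Countable ↥(Dseq n).1 := (Dseq n).2.1.to_subtype
    obtain ⟨V, hV𝔅, hw₀V, hVW⟩ := (hBas (Dseq n)).exists_subset_of_mem_open hw₀W hWopen
    have hVne : V.Nonempty := ⟨_, hw₀V⟩
    have hstepB : (stepf (Dseq n)).1 ⊆ B := fun a ha => ((stepf (Dseq n)).2.2 ha).1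
    have hg := hprop (Dseq n) m V hV𝔅 hVne x' hx' (hstep1 (Dseq n)) hstepB
    have hstepΛ : (stepf (Dseq n)).1 ⊆ Λ \ C := by
      intro a ha
      refine hDinfΛ (mem_iUnion.2 ⟨n + 1, ?_⟩)
      rw [hDseq_succ n]
      exact ha
    have hfinal := notSubset_mono (hstep1 (Dseq n)) hstepΛ hstepB hdiffB V
      (Kfib P hCB x') hg
    apply hfinal
    intro y hy
    have hyW : y ∈ projRes hDnΛ ⁻¹' W := mem_preimage.2 (hVW hy)
    exact interior_subset (hWsub hyW)
  -- the set equality between the goal sets and the fiber projections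
  refine ⟨Λ, hΓΛ, hΛB, hΛadm, hΛCc, ?_⟩
  have hseteq : ∀ x' : ∀ c : C, X c,
      projDiff (C := C) '' ({y : ∀ b : Λ, X b | projRes (hCΓ.trans hΓΛ) y = x'} ∩ proj Λ '' P)
        = projRes hdiffB '' Kfib P hCB x' := by
    intro x'
    ext w
    constructor
    · rintro ⟨y, ⟨hy1, p, hp, rfl⟩, rfl⟩
      refine ⟨proj B p, ⟨⟨p, hp, rfl⟩, hy1⟩, ?_⟩
      funext d
      rfl
    · rintro ⟨k, ⟨⟨p, hp, rfl⟩, hk2⟩, rfl⟩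
      refine ⟨proj Λ p, ⟨hk2, ⟨p, hp, rfl⟩⟩, ?_⟩
      funext d
      rfl
  intro x hx
  have hxF : x ∈ ⋃ n, Kc n := by rw [hKcover]; exact hx
  obtain ⟨m, hm⟩ := mem_iUnion.1 hxF
  constructor
  · rw [hseteq x]
    exact hmain m x (Or.inl hm)
  · rw [hseteq _]
    refine hmain m _ (Or.inr ?_)
    exact ⟨fC ⟨x, (hFsub hx).1⟩, ⟨⟨x, (hFsub hx).1⟩, hm, rfl⟩, rfl⟩
end

section
/- Let X = ∏_{α∈A} X_α be a product of nonempty compact metric spaces with |A| = τ an infinite cardinal, and let K ⊆ H(X) be a Lindelöf subset of the group H(X) of self-homeomorphisms of X with the compact-open topology. Then A can be covered by a family {A(α) : α < ω(τ)} of subsets of A, indexed by the ordinals below the initial ordinal ω(τ) of τ, such that: A(0) is countable; A(α) = ⋃_{γ<α} A(γ) whenever α is a limit ordinal; A(α) ⊆ A(α+1) and A(α+1) ∖ A(α) is countable for every α; and for every f ∈ K and every α there is a homeomorphism f_α ∈ H(X_{A(α)}) with π_{A(α)} ∘ f = f_α ∘ π_{A(α)}. -/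
universe u

open Set

/-- A self-homeomorphism viewed as an element of `C(Z, Z)`; the group `H(Z)` of
self-homeomorphisms with the compact-open topology is the range of this map with the
subspace topology. -/
def toCM {Z : Type u} [TopologicalSpace Z] (h : Z ≃ₜ Z) : C(Z, Z) :=
  ⟨⇑h, h.continuous⟩

namespace Stmt7Aux

open Filter
open scoped Uniformity

/-- Iterated closure under a coordinate-dependence operator. -/
def clos {I : Type u} (D : I → Set I) (s : Set I) : ℕ → Set I
  | 0 => s
  | n + 1 => clos D s n ∪ ⋃ j ∈ clos D s n, D j

def cl {I : Type u} (D : I → Set I) (s : Set I) : Set I := ⋃ n, clos D s n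

lemma subset_cl {I : Type u} (D : I → Set I) (s : Set I) : s ⊆ cl D s := fun _ hi =>
  mem_iUnion.2 ⟨0, hi⟩

lemma cl_countable {I : Type u} {D : I → Set I} (hD : ∀ i, (D i).Countable) {s : Set I}
    (hs : s.Countable) : (cl D s).Countable := by
  apply Set.countable_iUnion
  intro n
  induction n with
  | zero => exact hs
  | succ n ih => exact ih.union (ih.biUnion fun j _ => hD j)

lemma cl_good {I : Type u} {D : I → Set I} {s : Set I} : ∀ j ∈ cl D s, D j ⊆ cl D s := by
  intro j hj k hk
  obtain ⟨n, hn⟩ := mem_iUnion.1 hj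
  exact mem_iUnion.2 ⟨n + 1, Or.inr (mem_biUnion hn hk)⟩

variable {I : Type u} {X : I → Type u} [∀ i, MetricSpace (X i)] [∀ i, CompactSpace (X i)]

/-- A continuous map on a compact product into a metric space depends on countably many
coordinates. -/
lemma dep_countable {Y : Type u} [MetricSpace Y] (g : C((∀ i, X i), Y)) :
    ∃ S : Set I, S.Countable ∧ ∀ x y : ∀ i, X i, (∀ j ∈ S, x j = y j) → g x = g y := by
  have huc : UniformContinuous ⇑g := CompactSpace.uniformContinuous_of_continuous g.continuous
  have key : ∀ n : ℕ, ∃ F : Set I, F.Finite ∧ ∀ x y : ∀ i, X i,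
      (∀ j ∈ F, x j = y j) → dist (g x) (g y) < 1 / (n + 1) := by
    intro n
    have hmem : {p : (∀ i, X i) × (∀ i, X i) | dist (g p.1) (g p.2) < 1 / (n + 1)} ∈
        𝓤 (∀ i, X i) :=
      huc (Metric.dist_mem_uniformity (show (0 : ℝ) < 1 / (n + 1) by positivity))
    rw [Pi.uniformity] at hmem
    obtain ⟨F, hFfin, V, hV, hVuniv, -, hUV⟩ := Filter.mem_iInf'.1 hmem
    refine ⟨F, hFfin, fun x y hxy => ?_⟩
    have hmemV : (x, y) ∈ ⋂ i, V i := by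
      refine mem_iInter.2 fun i => ?_
      by_cases hiF : i ∈ F
      · obtain ⟨W, hW, hWV⟩ := Filter.mem_comap.1 (hV i)
        apply hWV
        show ((x, y).1 i, (x, y).2 i) ∈ W
        have hxyi : x i = y i := hxy i hiF
        simpa [hxyi] using refl_mem_uniformity hW
      · simp [hVuniv i hiF]
    rw [← hUV] at hmemV
    exact hmemV
  choose F hFfin hF using key
  refine ⟨⋃ n, F n, countable_iUnion fun n => (hFfin n).countable, fun x y hxy => ?_⟩
  have hall : ∀ n : ℕ, dist (g x) (g y) < 1 / (n + 1) := fun n =>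
    hF n x y fun j hj => hxy j (mem_iUnion.2 ⟨n, hj⟩)
  by_contra hne
  obtain ⟨n, hn⟩ := exists_nat_one_div_lt (dist_pos.2 hne)
  exact absurd (hall n) (not_lt.2 hn.le)

/-- Uniform version over a Lindelöf family. -/
lemma dep_countable_lindelof {Y : Type u} [MetricSpace Y] {L : Set C((∀ i, X i), Y)}
    (hL : IsLindelof L) :
    ∃ S : Set I, S.Countable ∧ ∀ g ∈ L, ∀ x y : ∀ i, X i,
      (∀ j ∈ S, x j = y j) → g x = g y := by
  choose dep hdepc hdep using fun g : C((∀ i, X i), Y) => dep_countable g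
  have cover : ∀ n : ℕ, ∃ t : Set C((∀ i, X i), Y), t.Countable ∧
      L ⊆ ⋃ h ∈ t, Metric.ball h (1 / (n + 1)) := by
    intro n
    obtain ⟨t, -, htc, hts⟩ := hL.elim_countable_subcover_image
      (b := L) (c := fun h => Metric.ball h (1 / (n + 1)))
      (fun _ _ => Metric.isOpen_ball)
      (fun g hg => mem_iUnion₂.2 ⟨g, hg, Metric.mem_ball_self (by positivity)⟩)
    exact ⟨t, htc, hts⟩
  choose t htc hts using cover
  refine ⟨⋃ n, ⋃ h ∈ t n, dep h,
    countable_iUnion fun n => (htc n).biUnion fun h _ => hdepc h,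
    fun g hg x y hxy => ?_⟩
  have hdist : ∀ n : ℕ, dist (g x) (g y) < 2 * (1 / (n + 1)) := by
    intro n
    obtain ⟨h, hht, hgh⟩ := mem_iUnion₂.1 (hts n hg)
    have hhxy : h x = h y := hdep h x y fun j hj =>
      hxy j (mem_iUnion.2 ⟨n, mem_iUnion₂.2 ⟨h, hht, hj⟩⟩)
    have hgh' : dist g h < 1 / (n + 1) := by
      simpa [dist_comm] using Metric.mem_ball.1 hgh
    calc dist (g x) (g y) ≤ dist (g x) (h x) + dist (h x) (g y) := dist_triangle _ _ _
      _ = dist (g x) (h x) + dist (h y) (g y) := by rw [hhxy]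
      _ ≤ dist g h + dist h g := add_le_add (ContinuousMap.dist_apply_le_dist x)
          (ContinuousMap.dist_apply_le_dist y)
      _ < 2 * (1 / (n + 1)) := by rw [dist_comm h g]; linarith
  by_contra hne
  obtain ⟨n, hn⟩ := exists_nat_one_div_lt (half_pos (dist_pos.2 hne))
  have := hdist n
  linarith



lemma toCM_injective {Z : Type u} [TopologicalSpace Z] :
    Function.Injective (toCM (Z := Z)) := by
  intro f g h
  exact Homeomorph.ext fun x => congrFun (congrArg DFunLike.coe h) x

/-- The image of a Lindelöf set of self-homeomorphisms under inversion is Lindelöf. -/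
lemma lindelof_symm {Z : Type u} [TopologicalSpace Z] [CompactSpace Z] [T2Space Z]
    {K : Set (Z ≃ₜ Z)} (hK : IsLindelof (toCM '' K)) :
    IsLindelof (toCM '' (Homeomorph.symm '' K)) := by
  classical
  set Φ : (toCM '' K) → C(Z, Z) := fun p => toCM (Classical.choose p.2).symm with hΦ
  have hspec : ∀ p : (toCM '' K), Classical.choose p.2 ∈ K ∧
      toCM (Classical.choose p.2) = p.1 := fun p =>
    ⟨(Classical.choose_spec p.2).1, (Classical.choose_spec p.2).2⟩
  have hiff : ∀ (f : Z ≃ₜ Z) (C U : Set Z), MapsTo (⇑f.symm) C U ↔ MapsTo (⇑f) Uᶜ Cᶜ := by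
    intro f C U
    constructor
    · intro h z hz hfz
      exact hz (by simpa using h hfz)
    · intro h z hz
      by_contra hzu
      exact h hzu (by simpa using hz)
  have hcont : Continuous Φ := by
    rw [ContinuousMap.continuous_compactOpen]
    intro C hC U hU
    have heq : {p : (toCM '' K) | MapsTo (Φ p) C U} =
        Subtype.val ⁻¹' {m : C(Z, Z) | MapsTo (⇑m) Uᶜ Cᶜ} := by
      ext p
      simp only [mem_setOf_eq, mem_preimage]
      have h2 := (hspec p).2
      have : MapsTo (Φ p) C U ↔ MapsTo (⇑(Classical.choose p.2)) Uᶜ Cᶜ :=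
        hiff (Classical.choose p.2) C U
      rw [this]
      exact iff_of_eq (congrArg (fun m : C(Z, Z) => MapsTo (⇑m) Uᶜ Cᶜ) h2)
    rw [heq]
    exact ((ContinuousMap.isOpen_setOf_mapsTo (hU.isClosed_compl.isCompact)
      (hC.isClosed.isOpen_compl))).preimage continuous_subtype_val
  have himg : Φ '' univ = toCM '' (Homeomorph.symm '' K) := by
    ext m
    constructor
    · rintro ⟨p, -, rfl⟩
      exact ⟨(Classical.choose p.2).symm, ⟨_, (hspec p).1, rfl⟩, rfl⟩
    · rintro ⟨f', ⟨f, hf, rfl⟩, rfl⟩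
      refine ⟨⟨toCM f, ⟨f, hf, rfl⟩⟩, mem_univ _, ?_⟩
      have : Classical.choose (⟨f, hf, rfl⟩ : ∃ g ∈ K, toCM g = toCM f) = f :=
        toCM_injective (hspec ⟨toCM f, ⟨f, hf, rfl⟩⟩).2
      simp only [hΦ]
      rw [this]
  have := (isLindelof_iff_isLindelof_univ.1 hK).image hcont
  rwa [himg] at this

/-- Factorization of a homeomorphism through a projection, given two-sided coordinate
dependence. -/
lemma factor_homeo {I : Type u} {X : I → Type u} [∀ i, TopologicalSpace (X i)]
    [∀ i, Nonempty (X i)]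
    (f : (∀ i, X i) ≃ₜ (∀ i, X i)) (A : Set I)
    (hfor : ∀ i ∈ A, ∀ x y : ∀ i, X i, (∀ j ∈ A, x j = y j) → f x i = f y i)
    (hinv : ∀ i ∈ A, ∀ x y : ∀ i, X i, (∀ j ∈ A, x j = y j) → f.symm x i = f.symm y i) :
    ∃ fα : (∀ b : A, X b) ≃ₜ (∀ b : A, X b),
      ∀ x : ∀ i, X i, proj A (f x) = fα (proj A x) := by
  classical
  have x0 : ∀ i, X i := fun i => Classical.arbitrary _
  set ex : (∀ b : A, X b) → ∀ i, X i := fun u i => if h : i ∈ A then u ⟨i, h⟩ else x0 i with hex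
  have hproj_ex : ∀ u, proj A (ex u) = u := by
    intro u; funext b
    show (if h : (b : I) ∈ A then u ⟨b, h⟩ else x0 b) = u b
    rw [dif_pos b.2]
  have hagree : ∀ x : ∀ i, X i, ∀ j ∈ A, x j = ex (proj A x) j := by
    intro x j hj
    show x j = if h : j ∈ A then x j else x0 j
    rw [dif_pos hj]
  have hex_cont : Continuous ex := by
    apply continuous_pi; intro i
    by_cases h : i ∈ A
    · simp only [hex, dif_pos h]
      exact continuous_apply _
    · simp only [hex, dif_neg h]
      exact continuous_const
  have hproj_cont : Continuous (proj A (X := X)) := continuous_pi fun b => continuous_apply _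
  set F : (∀ b : A, X b) → ∀ b : A, X b := fun u => proj A (f (ex u)) with hFdef
  set G : (∀ b : A, X b) → ∀ b : A, X b := fun u => proj A (f.symm (ex u)) with hGdef
  have hFx : ∀ x : ∀ i, X i, proj A (f x) = F (proj A x) := by
    intro x; funext b
    exact hfor b b.2 x (ex (proj A x)) (hagree x)
  have hGx : ∀ x : ∀ i, X i, proj A (f.symm x) = G (proj A x) := by
    intro x; funext b
    exact hinv b b.2 x (ex (proj A x)) (hagree x)
  have hGF : ∀ u, G (F u) = u := by
    intro u
    have h1 := hGx (f (ex u))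
    rw [Homeomorph.symm_apply_apply, hproj_ex u] at h1
    exact h1.symm
  have hFG : ∀ u, F (G u) = u := by
    intro u
    have h1 := hFx (f.symm (ex u))
    rw [Homeomorph.apply_symm_apply, hproj_ex u] at h1
    exact h1.symm
  exact ⟨⟨⟨F, G, hGF, hFG⟩, hproj_cont.comp (f.continuous.comp hex_cont),
    hproj_cont.comp (f.symm.continuous.comp hex_cont)⟩, hFx⟩

end Stmt7Aux

open Stmt7Aux in
/-- Proposition 3.1 of the paper: for a Lindelöf set `K` of self-homeomorphisms of a product
`X = ∏ X_i` of nonempty compact metric spaces with `|I| = τ`, the index set can be covered by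
an increasing transfinite family `{A(α) : α < ω(τ)}` with countable successive differences
such that every member of `K` factors through each projection `π_{A(α)}`. -/
theorem stmt7 {I : Type u} {X : I → Type u} [∀ i, MetricSpace (X i)]
    [∀ i, CompactSpace (X i)] [∀ i, Nonempty (X i)]
    (τ : Cardinal.{u}) (hτ : Cardinal.aleph0 ≤ τ) (hI : Cardinal.mk I = τ)
    (K : Set ((∀ i, X i) ≃ₜ (∀ i, X i))) (hK : IsLindelof (toCM '' K)) :
    ∃ 𝒜 : Ordinal.{u} → Set I,
      (∀ i : I, ∃ α < τ.ord, i ∈ 𝒜 α) ∧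
      (𝒜 0).Countable ∧
      (∀ α < τ.ord, Order.IsSuccLimit α → 𝒜 α = ⋃ γ < α, 𝒜 γ) ∧
      (∀ α < τ.ord, 𝒜 α ⊆ 𝒜 (α + 1) ∧ (𝒜 (α + 1) \ 𝒜 α).Countable) ∧
      (∀ f ∈ K, ∀ α < τ.ord,
        ∃ fα : (∀ b : 𝒜 α, X b) ≃ₜ (∀ b : 𝒜 α, X b),
          ∀ x : ∀ i, X i, proj (𝒜 α) (f x) = fα (proj (𝒜 α) x)) := by
  classical
  -- dependence sets
  have hKsymm : IsLindelof (toCM '' (Homeomorph.symm '' K)) := lindelof_symm hK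
  have key : ∀ i : I, ∃ S : Set I, S.Countable ∧ ∀ f ∈ K, ∀ x y : ∀ j, X j,
      (∀ j ∈ S, x j = y j) → f x i = f y i ∧ f.symm x i = f.symm y i := by
    intro i
    set ev : C((∀ j, X j), X i) := ⟨fun x => x i, continuous_apply i⟩ with hev
    have h1 : IsLindelof (ev.comp '' (toCM '' K)) :=
      hK.image (ContinuousMap.continuous_postcomp ev)
    have h2 : IsLindelof (ev.comp '' (toCM '' (Homeomorph.symm '' K))) :=
      hKsymm.image (ContinuousMap.continuous_postcomp ev)
    obtain ⟨S1, hS1c, hS1⟩ := dep_countable_lindelof h1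
    obtain ⟨S2, hS2c, hS2⟩ := dep_countable_lindelof h2
    refine ⟨S1 ∪ S2, hS1c.union hS2c, fun f hf x y hxy => ?_⟩
    constructor
    · exact hS1 (ev.comp (toCM f)) ⟨toCM f, ⟨f, hf, rfl⟩, rfl⟩ x y
        (fun j hj => hxy j (mem_union_left _ hj))
    · exact hS2 (ev.comp (toCM f.symm)) ⟨toCM f.symm, ⟨f.symm, ⟨f, hf, rfl⟩, rfl⟩, rfl⟩ x y
        (fun j hj => hxy j (mem_union_right _ hj))
  choose D hDc hD using key
  set g : I → Set I := fun i => cl D {i} with hg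
  have hgc : ∀ i, (g i).Countable := fun i => cl_countable hDc (countable_singleton i)
  have hgi : ∀ i, i ∈ g i := fun i => subset_cl D {i} rfl
  have hggood : ∀ i, ∀ j ∈ g i, D j ⊆ g i := fun i => cl_good
  -- enumeration
  have h0 : (0 : Ordinal) < τ.ord := by
    rw [Cardinal.lt_ord]
    simpa using Cardinal.aleph0_pos.trans_le hτ
  obtain ⟨E⟩ : Nonempty (I ≃ Iio τ.ord) := by
    rw [← Cardinal.lift_mk_eq']
    rw [Ordinal.mk_Iio_ordinal, Cardinal.card_ord, hI]
    simp
  set e : Ordinal.{u} → I := fun β => if h : β < τ.ord then E.symm ⟨β, h⟩ else E.symm ⟨0, h0⟩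
    with he
  set 𝒜 : Ordinal.{u} → Set I := fun α => ⋃ (β : Ordinal) (_ : β < α), g (e β) with h𝒜
  have hAgood : ∀ α, ∀ i ∈ 𝒜 α, D i ⊆ 𝒜 α := by
    intro α i hi
    obtain ⟨β, hβ, hig⟩ := mem_iUnion₂.1 hi
    exact (hggood (e β) i hig).trans fun k hk => mem_iUnion₂.2 ⟨β, hβ, hk⟩
  have hlim : Order.IsSuccLimit τ.ord := Cardinal.isSuccLimit_ord hτ
  refine ⟨𝒜, ?_, ?_, ?_, ?_, ?_⟩
  · -- covering
    intro i
    refine ⟨(E i).1 + 1, ?_, ?_⟩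
    · rw [Ordinal.add_one_eq_succ]
      exact hlim.succ_lt (E i).2
    · refine mem_iUnion₂.2 ⟨(E i).1, ?_, ?_⟩
      · rw [Ordinal.add_one_eq_succ]; exact Order.lt_succ _
      · have he' : ∀ (β : Ordinal) (h : β < τ.ord), e β = E.symm ⟨β, h⟩ := fun β h => dif_pos h
        have : e (E i).1 = i := by
          rw [he' _ (E i).2, Subtype.coe_eta, Equiv.symm_apply_apply]
        rw [this]
        exact hgi i
  · -- countable at 0
    have : 𝒜 0 = ∅ := by
      rw [h𝒜]
      simp
    rw [this]; exact countable_empty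
  · -- limit
    intro α hα hαlim
    apply Subset.antisymm
    · intro i hi
      obtain ⟨β, hβ, hig⟩ := mem_iUnion₂.1 hi
      refine mem_iUnion₂.2 ⟨β + 1, ?_, mem_iUnion₂.2 ⟨β, ?_, hig⟩⟩
      · rw [Ordinal.add_one_eq_succ]; exact hαlim.succ_lt hβ
      · rw [Ordinal.add_one_eq_succ]; exact Order.lt_succ _
    · intro i hi
      obtain ⟨γ, hγ, hiγ⟩ := mem_iUnion₂.1 hi
      obtain ⟨β, hβ, hig⟩ := mem_iUnion₂.1 hiγ
      exact mem_iUnion₂.2 ⟨β, hβ.trans hγ, hig⟩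
  · -- successor step
    intro α hα
    constructor
    · intro i hi
      obtain ⟨β, hβ, hig⟩ := mem_iUnion₂.1 hi
      exact mem_iUnion₂.2 ⟨β, hβ.trans (by rw [Ordinal.add_one_eq_succ]; exact Order.lt_succ _),
        hig⟩
    · refine Countable.mono ?_ (hgc (e α))
      rintro i ⟨hi1, hi2⟩
      obtain ⟨β, hβ, hig⟩ := mem_iUnion₂.1 hi1
      have hβle : β ≤ α := by
        rw [Ordinal.add_one_eq_succ, Order.lt_succ_iff] at hβ
        exact hβ
      rcases hβle.lt_or_eq with h | h
      · exact absurd (mem_iUnion₂.2 ⟨β, h, hig⟩) hi2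
      · rwa [h] at hig
  · -- factorization
    intro f hf α hα
    refine factor_homeo f (𝒜 α) ?_ ?_
    · intro i hi x y hxy
      exact (hD i f hf x y fun j hj => hxy j (hAgood α i hi hj)).1
    · intro i hi x y hxy
      exact (hD i f hf x y fun j hj => hxy j (hAgood α i hi hj)).2
end

section
/- Let X = ∏_{α∈A} X_α be a product of nonempty compact metric spaces with A uncountable, and let K ⊆ H(X) be a Lindelöf subset of the group H(X) of self-homeomorphisms of X with the compact-open topology. Then for every countable set B ⊆ A there is a countable set Γ(B) ⊆ A containing B such that for every f ∈ K there exist continuous maps f_{Γ(B)}, g_{Γ(B)} : X_{Γ(B)} → X_B with π_B ∘ f = f_{Γ(B)} ∘ π_{Γ(B)} and π_B ∘ f^{-1} = g_{Γ(B)} ∘ π_{Γ(B)}. -/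
universe u

open Set

open Filter Topology Uniformity

/-- Evaluation at a coordinate, as a continuous map. -/
def evCM {I : Type u} (X : I → Type u) [∀ i, TopologicalSpace (X i)] (i : I) :
    C((∀ j, X j), X i) := ⟨fun z => z i, continuous_apply i⟩

/-- A continuous map from a compact product of metric spaces into a metric space is
uniformly approximately determined by finitely many coordinates. -/
lemma unifFactor {I : Type u} {X : I → Type u} [∀ i, MetricSpace (X i)]
    [∀ i, CompactSpace (X i)] {M : Type*} [MetricSpace M]
    (φ : (∀ i, X i) → M) (hφ : Continuous φ) {ε : ℝ} (hε : 0 < ε) :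
    ∃ (F : Finset I) (δ : ℝ), 0 < δ ∧
      ∀ x y : ∀ i, X i, (∀ i ∈ F, dist (x i) (y i) < δ) → dist (φ x) (φ y) < ε := by
  classical
  have hu : UniformContinuous φ := CompactSpace.uniformContinuous_of_continuous hφ
  have hmem : {p : (∀ i, X i) × (∀ i, X i) | dist (φ p.1) (φ p.2) < ε} ∈ 𝓤 (∀ i, X i) :=
    hu (Metric.dist_mem_uniformity hε)
  rw [Pi.uniformity, Filter.mem_iInf'] at hmem
  obtain ⟨S, hSfin, V, hV, hVuniv, -, hU⟩ := hmem
  have hV' : ∀ i, ∃ δ > 0, ∀ p : (∀ j, X j) × (∀ j, X j),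
      dist (p.1 i) (p.2 i) < δ → p ∈ V i := by
    intro i
    obtain ⟨t, ht, hsub⟩ := Filter.mem_comap.mp (hV i)
    obtain ⟨δ, hδ, hd⟩ := Metric.mem_uniformity_dist.mp ht
    exact ⟨δ, hδ, fun p hp => hsub (hd hp)⟩
  choose δf hδf hδ using hV'
  set F : Finset I := hSfin.toFinset with hFdef
  obtain ⟨δ, hδ0, hδle⟩ : ∃ δ > 0, ∀ i ∈ F, δ ≤ δf i := by
    rcases F.eq_empty_or_nonempty with hFe | hne
    · exact ⟨1, one_pos, by simp [hFe]⟩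
    · exact ⟨F.inf' hne δf, (Finset.lt_inf'_iff hne).2 fun i _ => hδf i,
        fun i hi => Finset.inf'_le _ hi⟩
  refine ⟨F, δ, hδ0, fun x y h => ?_⟩
  have hxy : (x, y) ∈ ⋂ i, V i := by
    refine mem_iInter.2 fun i => ?_
    by_cases hi : i ∈ S
    · have hiF : i ∈ F := hSfin.mem_toFinset.2 hi
      exact hδ i (x, y) (lt_of_lt_of_le (h i hiF) (hδle i hiF))
    · simp [hVuniv i hi]
  rw [← hU] at hxy
  exact hxy

/-- Claim 3.2 of the paper: for every countable `B ⊆ I` there is a countable `Γ(B) ⊇ B`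
such that for every `f` in the Lindelöf set `K ⊆ H(X)`, both `π_B ∘ f` and `π_B ∘ f⁻¹`
factor continuously through `π_{Γ(B)}`. -/
theorem stmt8 {I : Type u} {X : I → Type u} [∀ i, MetricSpace (X i)]
    [∀ i, CompactSpace (X i)] [∀ i, Nonempty (X i)] [Uncountable I]
    (K : Set ((∀ i, X i) ≃ₜ (∀ i, X i))) (hK : IsLindelof (toCM '' K))
    (B : Set I) (hB : B.Countable) :
    ∃ Γ : Set I, Γ.Countable ∧ B ⊆ Γ ∧
      ∀ f ∈ K, ∃ fΓ gΓ : (∀ g : Γ, X g) → (∀ b : B, X b),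
        Continuous fΓ ∧ Continuous gΓ ∧
        (∀ x : ∀ i, X i, proj B (f x) = fΓ (proj Γ x)) ∧
        (∀ x : ∀ i, X i, proj B (f.symm x) = gΓ (proj Γ x)) := by
  classical
  set Y := ∀ i, X i with hY
  -- Step 1: uniform-continuity data for each homeomorphism, coordinate, and precision
  have key : ∀ (f : Y ≃ₜ Y) (b : I) (n : ℕ), ∃ (F : Finset I) (δ : ℝ),
      0 < δ ∧ δ ≤ 1/(n+1) ∧
      (∀ x y : Y, (∀ i ∈ F, dist (x i) (y i) < δ) → dist (f x b) (f y b) < 1/(n+1)) ∧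
      (∀ x y : Y, (∀ i ∈ F, dist (x i) (y i) < δ) →
        dist (f.symm x b) (f.symm y b) < 1/(n+1)) := by
    intro f b n
    have hε : (0:ℝ) < 1/(n+1) := by positivity
    obtain ⟨F1, δ1, hδ1, h1⟩ := unifFactor (fun x : Y => f x b)
      ((continuous_apply b).comp f.continuous) hε
    obtain ⟨F2, δ2, hδ2, h2⟩ := unifFactor (fun x : Y => f.symm x b)
      ((continuous_apply b).comp f.symm.continuous) hε
    refine ⟨F1 ∪ F2, min (min δ1 δ2) (1/(n+1)), by positivity, min_le_right _ _,
      fun x y h => h1 x y fun i hi => lt_of_lt_of_le (h i (Finset.mem_union_left _ hi))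
        (le_trans (min_le_left _ _) (min_le_left _ _)),
      fun x y h => h2 x y fun i hi => lt_of_lt_of_le (h i (Finset.mem_union_right _ hi))
        (le_trans (min_le_left _ _) (min_le_right _ _))⟩
  choose F δ hδ0 hδle hfwd hbwd using key
  -- Step 2: Lindelöf extraction, for each coordinate b and precision n
  have cov : ∀ (b : I) (n : ℕ), ∃ T : Set ↥K, T.Countable ∧
      ∀ g ∈ K, ∃ f ∈ T, ∀ i ∈ insert b (F (f : ↥K).1 b n), ∀ z : Y,
        dist (g z i) ((f : ↥K).1 z i) < δ (f : ↥K).1 b n := by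
    intro b n
    set U : ↥K → Set C(Y, Y) := fun f =>
      ⋂ i ∈ insert b (F f.1 b n),
        (fun u : C(Y, Y) => (evCM X i).comp u) ⁻¹'
          Metric.ball ((evCM X i).comp (toCM f.1)) (δ f.1 b n) with hUdef
    have hUopen : ∀ f, IsOpen (U f) := fun f =>
      isOpen_biInter_finset fun i _ =>
        Metric.isOpen_ball.preimage (ContinuousMap.continuous_postcomp _)
    have hcov : toCM '' K ⊆ ⋃ f : ↥K, U f := by
      rintro u ⟨g, hg, rfl⟩
      exact mem_iUnion.2 ⟨⟨g, hg⟩, mem_iInter₂.2 fun i _ =>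
        Metric.mem_ball_self (hδ0 g b n)⟩
    obtain ⟨T, hTc, hTsub⟩ := hK.elim_countable_subcover U hUopen hcov
    refine ⟨T, hTc, fun g hg => ?_⟩
    obtain ⟨f, hfT, hfU⟩ := mem_iUnion₂.mp (hTsub ⟨g, hg, rfl⟩)
    refine ⟨f, hfT, fun i hi z => ?_⟩
    have h1 : (evCM X i).comp (toCM g) ∈
        Metric.ball ((evCM X i).comp (toCM f.1)) (δ f.1 b n) :=
      mem_iInter₂.mp hfU i hi
    exact lt_of_le_of_lt
      (ContinuousMap.dist_apply_le_dist (f := (evCM X i).comp (toCM g))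
        (g := (evCM X i).comp (toCM f.1)) z) h1
  choose T hTc hTsub using cov
  -- Step 3: the countable set Γ
  set Γ : Set I := B ∪ ⋃ b ∈ B, ⋃ n : ℕ, ⋃ f ∈ T b n, ((F (f : ↥K).1 b n : Finset I) : Set I)
    with hΓdef
  have hΓc : Γ.Countable := by
    refine hB.union (hB.biUnion fun b _ => countable_iUnion fun n =>
      ((hTc b n).biUnion fun f _ => (F (f : ↥K).1 b n).countable_toSet))
  have hBΓ : B ⊆ Γ := subset_union_left
  -- Step 4: main invariance claim
  have main : ∀ g ∈ K, ∀ x y : Y, proj Γ x = proj Γ y →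
      ∀ b : ↥B, g x b = g y b ∧ g.symm x b = g.symm y b := by
    intro g hg x y hxy b
    have hagree : ∀ i ∈ Γ, x i = y i := fun i hi => congrFun hxy ⟨i, hi⟩
    have hn : ∀ n : ℕ, dist (g x b.1) (g y b.1) < 3 * (1/(n+1)) ∧
        dist (g.symm x b.1) (g.symm y b.1) < 3 * (1/(n+1)) := by
      intro n
      obtain ⟨f, hfT, hclose⟩ := hTsub b.1 n g hg
      have hFΓ : ∀ i ∈ F (f : ↥K).1 b.1 n, (i : I) ∈ Γ := fun i hi =>
        Or.inr (mem_biUnion b.2 (mem_iUnion.2 ⟨n, mem_biUnion hfT hi⟩))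
      have hzero : ∀ i ∈ F (f : ↥K).1 b.1 n, dist (x i) (y i) < δ (f : ↥K).1 b.1 n := by
        intro i hi
        rw [hagree i (hFΓ i hi)]
        simpa using hδ0 (f : ↥K).1 b.1 n
      have hb : (b : I) ∈ insert b.1 (F (f : ↥K).1 b.1 n) := Finset.mem_insert_self _ _
      constructor
      · have hmid : dist ((f : ↥K).1 x b.1) ((f : ↥K).1 y b.1) < 1/(n+1) :=
          hfwd (f : ↥K).1 b.1 n x y hzero
        have h1 := hclose b.1 hb x
        have h2 := hclose b.1 hb y
        have hδε := hδle (f : ↥K).1 b.1 n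
        calc dist (g x b.1) (g y b.1)
            ≤ dist (g x b.1) ((f : ↥K).1 x b.1) + dist ((f : ↥K).1 x b.1) ((f : ↥K).1 y b.1)
              + dist ((f : ↥K).1 y b.1) (g y b.1) := dist_triangle4 _ _ _ _
          _ < 3 * (1/(n+1)) := by
              rw [dist_comm ((f : ↥K).1 y b.1) (g y b.1)] at *
              linarith
      · -- backward direction
        have hsame : ∀ z : Y, dist (g.symm z b.1) ((f : ↥K).1.symm z b.1) < 1/(n+1) := by
          intro z
          have hz1 : g.symm z b.1 = (f : ↥K).1.symm ((f : ↥K).1 (g.symm z)) b.1 := by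
            rw [Homeomorph.symm_apply_apply]
          have hz2 : z = g (g.symm z) := (g.apply_symm_apply z).symm
          have hkey : dist ((f : ↥K).1.symm ((f : ↥K).1 (g.symm z)) b.1)
              ((f : ↥K).1.symm (g (g.symm z)) b.1) < 1/(n+1) :=
            hbwd (f : ↥K).1 b.1 n _ _ fun i hi => by
              rw [dist_comm]
              exact hclose i (Finset.mem_insert_of_mem hi) (g.symm z)
          rw [g.apply_symm_apply] at hkey
          rw [hz1]
          exact hkey
        have hmid : dist ((f : ↥K).1.symm x b.1) ((f : ↥K).1.symm y b.1) < 1/(n+1) :=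
          hbwd (f : ↥K).1 b.1 n x y hzero
        have h1 := hsame x
        have h2 := hsame y
        calc dist (g.symm x b.1) (g.symm y b.1)
            ≤ dist (g.symm x b.1) ((f : ↥K).1.symm x b.1)
              + dist ((f : ↥K).1.symm x b.1) ((f : ↥K).1.symm y b.1)
              + dist ((f : ↥K).1.symm y b.1) (g.symm y b.1) := dist_triangle4 _ _ _ _
          _ < 3 * (1/(n+1)) := by
              rw [dist_comm ((f : ↥K).1.symm y b.1) (g.symm y b.1)] at *
              linarith
    have hdist : ∀ a c : X b.1, (∀ n : ℕ, dist a c < 3 * (1/(n+1))) → a = c := by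
      intro a c h
      refine eq_of_forall_dist_le fun ε hε => ?_
      obtain ⟨n, hn1⟩ := exists_nat_one_div_lt (show (0:ℝ) < ε/3 by positivity)
      have := h n
      linarith
    exact ⟨hdist _ _ fun n => (hn n).1, hdist _ _ fun n => (hn n).2⟩
  -- Step 5: construct the factorizations via a continuous section
  set s : (∀ γ : Γ, X γ) → Y := fun z i => if h : i ∈ Γ then z ⟨i, h⟩ else Classical.arbitrary (X i)
    with hsdef
  have hs_cont : Continuous s := by
    refine continuous_pi fun i => ?_
    by_cases h : i ∈ Γ
    · simpa [hsdef, h] using continuous_apply (⟨i, h⟩ : Γ)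
    · simp only [hsdef, dif_neg h]
      exact continuous_const
  have hs_proj : ∀ z, proj Γ (s z) = z := by
    intro z
    funext γ
    simp [proj, hsdef, γ.2]
  have hpB : Continuous (proj B : Y → ∀ b : B, X b) := continuous_pi fun b => continuous_apply _
  refine ⟨Γ, hΓc, hBΓ, fun f hf => ?_⟩
  refine ⟨fun z => proj B (f (s z)), fun z => proj B (f.symm (s z)),
    hpB.comp (f.continuous.comp hs_cont), hpB.comp (f.symm.continuous.comp hs_cont), ?_, ?_⟩
  · intro x
    funext b
    exact (main f hf x (s (proj Γ x)) (hs_proj (proj Γ x)).symm b).1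
  · intro x
    funext b
    exact (main f hf x (s (proj Γ x)) (hs_proj (proj Γ x)).symm b).2
end

section
/- Let X = ∏_{α∈A} X_α be a product of nonempty compact metric spaces with A uncountable, and let K ⊆ H(X) be a Lindelöf subset of the group H(X) of self-homeomorphisms of X with the compact-open topology. Then for every countable set B ⊆ A there is a countable set Λ(B) ⊆ A containing B such that for every f ∈ K there exist homeomorphisms f_{Λ(B)}, g_{Λ(B)} ∈ H(X_{Λ(B)}) with π_{Λ(B)} ∘ f = f_{Λ(B)} ∘ π_{Λ(B)} and π_{Λ(B)} ∘ f^{-1} = g_{Λ(B)} ∘ π_{Λ(B)}. -/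
universe u

open Set

section Aux

open Uniformity Filter Topology

set_option linter.unusedSectionVars false

variable {I : Type u} {X : I → Type u} [∀ i, MetricSpace (X i)]
    [∀ i, CompactSpace (X i)] [∀ i, Nonempty (X i)]

/-- Every entourage of the product contains an "agree on a finite set" entourage. -/
lemma ent_finite {W : Set ((∀ i, X i) × (∀ i, X i))} (hW : W ∈ 𝓤 (∀ i, X i)) :
    ∃ S : Set I, S.Finite ∧ ∀ x y : ∀ i, X i, (∀ i ∈ S, x i = y i) → (x, y) ∈ W := by
  rw [Pi.uniformity, Filter.mem_iInf] at hW
  obtain ⟨S, hSfin, V, hV, rfl⟩ := hW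
  refine ⟨S, hSfin, fun x y hxy => ?_⟩
  rw [mem_iInter]
  intro i
  obtain ⟨U, hU, hUsub⟩ := (Filter.mem_comap).1 (hV i)
  apply hUsub
  simp only [mem_preimage, hxy i i.2]
  exact refl_mem_uniformity hU

/-- Mibu's lemma, approximate version. -/
lemma mibu {g : (∀ i, X i) → (∀ i, X i)} (hg : Continuous g) (α : I) {ε : ℝ} (hε : 0 < ε) :
    ∃ S : Set I, S.Finite ∧ ∀ x y, (∀ i ∈ S, x i = y i) → dist (g x α) (g y α) < ε := by
  have huc : UniformContinuous fun x => g x α :=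
    CompactSpace.uniformContinuous_of_continuous ((continuous_apply α).comp hg)
  have hW : {p : (∀ i, X i) × (∀ i, X i) | dist (g p.1 α) (g p.2 α) < ε} ∈ 𝓤 (∀ i, X i) :=
    huc (Metric.dist_mem_uniformity hε)
  obtain ⟨S, hS, h⟩ := ent_finite hW
  exact ⟨S, hS, fun x y hxy => h x y hxy⟩

/-- Uniform approximate dependence for a Lindelöf family. -/
lemma unif_dep {S : Set C((∀ i, X i), (∀ i, X i))} (hS : IsLindelof S) (α : I)
    {ε : ℝ} (hε : 0 < ε) :
    ∃ D : Set I, D.Countable ∧ ∀ g ∈ S, ∀ x y : ∀ i, X i,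
      (∀ i ∈ D, x i = y i) → dist (g x α) (g y α) ≤ ε := by
  classical
  have hε3 : 0 < ε / 3 := by linarith
  -- evaluation-at-α postcomposition map
  set Φ : C((∀ i, X i), (∀ i, X i)) → C((∀ i, X i), X α) :=
    fun g => ContinuousMap.comp ⟨fun x => x α, continuous_apply α⟩ g with hΦ
  have hΦc : Continuous Φ := ContinuousMap.continuous_postcomp _
  -- choose finite dependence sets for each g ∈ S
  have hpick : ∀ g : C((∀ i, X i), (∀ i, X i)), ∃ T : Set I, T.Finite ∧
      ∀ x y, (∀ i ∈ T, x i = y i) → dist (g x α) (g y α) < ε / 3 :=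
    fun g => mibu g.continuous α hε3
  choose T hTfin hTdep using hpick
  -- open cover of S by uniform ε/3-balls around elements of S
  have hcover : S ⊆ ⋃ g : S, Φ ⁻¹' Metric.ball (Φ g) (ε / 3) := by
    intro g hg
    exact mem_iUnion.2 ⟨⟨g, hg⟩, by simp [Metric.mem_ball, hε3]⟩
  obtain ⟨r, hr_cnt, hr⟩ := hS.elim_countable_subcover
    (fun g : S => Φ ⁻¹' Metric.ball (Φ g) (ε / 3))
    (fun g => (Metric.isOpen_ball).preimage hΦc) hcover
  refine ⟨⋃ g ∈ r, T (g : C((∀ i, X i), (∀ i, X i))), hr_cnt.biUnion (fun g _ => (hTfin _).countable), ?_⟩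
  intro g hg x y hxy
  obtain ⟨c, hc_mem, hc⟩ := mem_iUnion₂.1 (hr hg)
  have hclose : ∀ z, dist (g z α) ((c : C((∀ i, X i), (∀ i, X i))) z α) < ε / 3 := by
    intro z
    have := ContinuousMap.dist_apply_le_dist (f := Φ g) (g := Φ c) z
    have hd : dist (Φ g) (Φ c) < ε / 3 := by
      simpa [Metric.mem_ball] using hc
    calc dist (g z α) ((c : C((∀ i, X i), (∀ i, X i))) z α) ≤ dist (Φ g) (Φ c) := this
      _ < ε / 3 := hd
  have hdep : dist ((c : C((∀ i, X i), (∀ i, X i))) x α) ((c : C((∀ i, X i), (∀ i, X i))) y α) < ε / 3 := by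
    refine hTdep _ x y fun i hi => hxy i ?_
    exact mem_biUnion hc_mem hi
  calc dist (g x α) (g y α)
      ≤ dist (g x α) ((c : C((∀ i, X i), (∀ i, X i))) x α)
        + dist ((c : C((∀ i, X i), (∀ i, X i))) x α) ((c : C((∀ i, X i), (∀ i, X i))) y α)
        + dist ((c : C((∀ i, X i), (∀ i, X i))) y α) (g y α) := dist_triangle4 _ _ _ _
    _ ≤ ε := by
        have h1 := hclose x
        have h2 := hclose y
        rw [dist_comm ((c : C((∀ i, X i), (∀ i, X i))) y α) (g y α)] at *
        linarith [hdep]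

/-- Exact uniform dependence for a Lindelöf family, one coordinate. -/
lemma exact_dep {S : Set C((∀ i, X i), (∀ i, X i))} (hS : IsLindelof S) (α : I) :
    ∃ D : Set I, D.Countable ∧ ∀ g ∈ S, ∀ x y : ∀ i, X i,
      (∀ i ∈ D, x i = y i) → g x α = g y α := by
  have h : ∀ n : ℕ, ∃ D : Set I, D.Countable ∧ ∀ g ∈ S, ∀ x y : ∀ i, X i,
      (∀ i ∈ D, x i = y i) → dist (g x α) (g y α) ≤ 1 / (n + 1) :=
    fun n => unif_dep hS α (by positivity)
  choose D hDcnt hD using h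
  refine ⟨⋃ n, D n, countable_iUnion hDcnt, fun g hg x y hxy => ?_⟩
  have : ∀ n : ℕ, dist (g x α) (g y α) ≤ 1 / (n + 1) :=
    fun n => hD n g hg x y fun i hi => hxy i (mem_iUnion.2 ⟨n, hi⟩)
  have h0 : dist (g x α) (g y α) ≤ 0 := ge_of_tendsto' tendsto_one_div_add_atTop_nhds_zero_nat this
  exact dist_le_zero.1 h0

/-- Exact uniform dependence over a countable set of coordinates. -/
lemma exact_dep_set {S : Set C((∀ i, X i), (∀ i, X i))} (hS : IsLindelof S)
    {C : Set I} (hC : C.Countable) :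
    ∃ D : Set I, D.Countable ∧ ∀ g ∈ S, ∀ α ∈ C, ∀ x y : ∀ i, X i,
      (∀ i ∈ D, x i = y i) → g x α = g y α := by
  have h : ∀ α : I, ∃ D : Set I, D.Countable ∧ ∀ g ∈ S, ∀ x y : ∀ i, X i,
      (∀ i ∈ D, x i = y i) → g x α = g y α := fun α => exact_dep hS α
  choose D hDcnt hD using h
  refine ⟨⋃ α ∈ C, D α, hC.biUnion (fun α _ => hDcnt α), fun g hg α hα x y hxy => ?_⟩
  exact hD α g hg x y fun i hi => hxy i (mem_biUnion hα hi)

/-- Closing off: a countable set `Λ ⊇ B` such that every `g ∈ S` depends, on each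
coordinate of `Λ`, only on the coordinates in `Λ`. -/
lemma closure_dep {S : Set C((∀ i, X i), (∀ i, X i))} (hS : IsLindelof S)
    {B : Set I} (hB : B.Countable) :
    ∃ Λ : Set I, Λ.Countable ∧ B ⊆ Λ ∧ ∀ g ∈ S, ∀ α ∈ Λ, ∀ x y : ∀ i, X i,
      (∀ i ∈ Λ, x i = y i) → g x α = g y α := by
  classical
  have hop : ∀ C : Set I, ∃ D : Set I, (C.Countable → D.Countable ∧ ∀ g ∈ S, ∀ α ∈ C,
      ∀ x y : ∀ i, X i, (∀ i ∈ D, x i = y i) → g x α = g y α) := by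
    intro C
    by_cases hC : C.Countable
    · obtain ⟨D, h1, h2⟩ := exact_dep_set hS hC
      exact ⟨D, fun _ => ⟨h1, h2⟩⟩
    · exact ⟨∅, fun h => absurd h hC⟩
  choose op hopspec using hop
  let L : ℕ → Set I := fun n => Nat.rec B (fun _ prev => prev ∪ op prev) n
  have hLsucc : ∀ n, L (n + 1) = L n ∪ op (L n) := fun n => rfl
  have hLcnt : ∀ n, (L n).Countable := by
    intro n
    induction n with
    | zero => exact hB
    | succ n ih => exact ih.union ((hopspec (L n) ih).1)
  have hmono : ∀ n, L n ⊆ L (n + 1) := fun n => by rw [hLsucc]; exact subset_union_left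
  refine ⟨⋃ n, L n, countable_iUnion hLcnt, subset_iUnion L 0, ?_⟩
  intro g hg α hα x y hxy
  obtain ⟨n, hn⟩ := mem_iUnion.1 hα
  refine (hopspec (L n) (hLcnt n)).2 g hg α hn x y fun i hi => ?_
  exact hxy i (mem_iUnion.2 ⟨n + 1, by rw [hLsucc]; exact Or.inr hi⟩)

lemma toCM_injective {Z : Type u} [TopologicalSpace Z] :
    Function.Injective (toCM (Z := Z)) := by
  intro e f h
  have h2 : ⇑e = ⇑f := congrArg (fun c : C(Z, Z) => ⇑c) h
  exact Homeomorph.ext (funext_iff.1 h2)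

/-- The image of the inverses of a Lindelöf set of homeomorphisms is Lindelöf. -/
lemma inv_lindelof {Z : Type u} [TopologicalSpace Z] [CompactSpace Z] [T2Space Z]
    (K : Set (Z ≃ₜ Z)) (hK : IsLindelof (toCM '' K)) :
    IsLindelof (toCM '' (Homeomorph.symm '' K)) := by
  classical
  set Φ : C(Z, Z) → C(Z, Z) := fun g =>
    if h : ∃ e : Z ≃ₜ Z, toCM e = g then toCM (Classical.choose h).symm else g with hΦ
  have hΦ_eq : ∀ f : Z ≃ₜ Z, Φ (toCM f) = toCM f.symm := by
    intro f
    have hex : ∃ e : Z ≃ₜ Z, toCM e = toCM f := ⟨f, rfl⟩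
    have : Classical.choose hex = f := toCM_injective (Classical.choose_spec hex)
    simp only [hΦ, dif_pos hex, this]
  have himg : toCM '' (Homeomorph.symm '' K) = Φ '' (toCM '' K) := by
    ext g
    constructor
    · rintro ⟨f', ⟨f, hf, rfl⟩, rfl⟩
      exact ⟨toCM f, ⟨f, hf, rfl⟩, hΦ_eq f⟩
    · rintro ⟨g', ⟨f, hf, rfl⟩, rfl⟩
      exact ⟨f.symm, ⟨f, hf, rfl⟩, (hΦ_eq f).symm⟩
  rw [himg]
  refine hK.image_of_continuousOn ?_
  rw [continuousOn_iff_continuous_restrict]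
  refine ContinuousMap.continuous_compactOpen.2 fun C hC U hU => ?_
  have key : {x : toCM '' K | Set.MapsTo (Set.domRestrict (toCM '' K) Φ x) C U}
      = Subtype.val ⁻¹' {g : C(Z, Z) | Set.MapsTo g Uᶜ Cᶜ} := by
    ext ⟨g, hg⟩
    obtain ⟨f, hf, rfl⟩ := hg
    simp only [Set.domRestrict, mem_setOf_eq, mem_preimage]
    rw [hΦ_eq f]
    constructor
    · intro h z hz hfz
      have := h hfz
      simp only [toCM, ContinuousMap.coe_mk, Homeomorph.symm_apply_apply] at this
      exact hz this
    · intro h c hc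
      by_contra hcu
      have := h hcu
      simp only [toCM, ContinuousMap.coe_mk, Homeomorph.apply_symm_apply] at this
      exact this hc
  rw [key]
  exact (ContinuousMap.isOpen_setOf_mapsTo (hU.isClosed_compl.isCompact)
    hC.isClosed.isOpen_compl).preimage continuous_subtype_val

end Aux

/-- Claim 3.3 of the paper: for every countable `B ⊆ I` there is a countable `Λ(B) ⊇ B`
such that for every `f` in the Lindelöf set `K ⊆ H(X)`, both `f` and `f⁻¹` induce
homeomorphisms of `X_{Λ(B)}` commuting with the projection `π_{Λ(B)}`. -/
theorem stmt9 {I : Type u} {X : I → Type u} [∀ i, MetricSpace (X i)]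
    [∀ i, CompactSpace (X i)] [∀ i, Nonempty (X i)] [Uncountable I]
    (K : Set ((∀ i, X i) ≃ₜ (∀ i, X i))) (hK : IsLindelof (toCM '' K))
    (B : Set I) (hB : B.Countable) :
    ∃ Λ : Set I, Λ.Countable ∧ B ⊆ Λ ∧
      ∀ f ∈ K, ∃ fΛ gΛ : (∀ b : Λ, X b) ≃ₜ (∀ b : Λ, X b),
        (∀ x : ∀ i, X i, proj Λ (f x) = fΛ (proj Λ x)) ∧
        (∀ x : ∀ i, X i, proj Λ (f.symm x) = gΛ (proj Λ x)) := by
  classical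
  set S : Set C((∀ i, X i), (∀ i, X i)) := toCM '' K ∪ toCM '' (Homeomorph.symm '' K) with hSdef
  have hS : IsLindelof S := hK.union (inv_lindelof K hK)
  obtain ⟨Λ, hΛcnt, hBΛ, hdep⟩ := closure_dep hS hB
  refine ⟨Λ, hΛcnt, hBΛ, ?_⟩
  intro f hf
  -- extension of a partial point to a full point
  set ext : (∀ b : Λ, X b) → ∀ i, X i :=
    fun u i => if h : i ∈ Λ then u ⟨i, h⟩ else Classical.arbitrary (X i) with hextdef
  have hext_proj : ∀ x : ∀ i, X i, ∀ i ∈ Λ, ext (proj Λ x) i = x i := by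
    intro x i hi
    simp [hextdef, dif_pos hi, proj]
  have hext_cont : Continuous ext := by
    refine continuous_pi fun i => ?_
    by_cases h : i ∈ Λ
    · simp only [hextdef, dif_pos h]
      exact continuous_apply _
    · simp only [hextdef, dif_neg h]
      exact continuous_const
  -- dependence of any homeo whose `toCM` is in `S`
  have fact : ∀ e : (∀ i, X i) ≃ₜ (∀ i, X i), toCM e ∈ S →
      ∀ x : ∀ i, X i, proj Λ (e x) = proj Λ (e (ext (proj Λ x))) := by
    intro e he x
    funext b
    exact hdep (toCM e) he b b.2 x (ext (proj Λ x)) fun i hi => (hext_proj x i hi).symm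
  have hfS : toCM f ∈ S := Or.inl ⟨f, hf, rfl⟩
  have hfsS : toCM f.symm ∈ S := Or.inr ⟨f.symm, ⟨f, hf, rfl⟩, rfl⟩
  -- induced maps
  set F : (∀ b : Λ, X b) → ∀ b : Λ, X b := fun u => proj Λ (f (ext u)) with hFdef
  set G : (∀ b : Λ, X b) → ∀ b : Λ, X b := fun u => proj Λ (f.symm (ext u)) with hGdef
  have hproj_ext : ∀ u : ∀ b : Λ, X b, proj Λ (ext u) = u := by
    intro u
    funext b
    simp [proj, hextdef, dif_pos b.2]
  have hFfact : ∀ x : ∀ i, X i, proj Λ (f x) = F (proj Λ x) := fun x => fact f hfS x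
  have hGfact : ∀ x : ∀ i, X i, proj Λ (f.symm x) = G (proj Λ x) := fun x => fact f.symm hfsS x
  have hGF : ∀ u, G (F u) = u := by
    intro u
    have h1 : F u = proj Λ (f (ext u)) := rfl
    rw [h1, ← hGfact (f (ext u))]
    simp only [Homeomorph.symm_apply_apply]
    exact hproj_ext u
  have hFG : ∀ u, F (G u) = u := by
    intro u
    have h1 : G u = proj Λ (f.symm (ext u)) := rfl
    rw [h1, ← hFfact (f.symm (ext u))]
    simp only [Homeomorph.apply_symm_apply]
    exact hproj_ext u
  have hFcont : Continuous F :=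
    continuous_pi fun b => (continuous_apply (b : I)).comp (f.continuous.comp hext_cont)
  have hGcont : Continuous G :=
    continuous_pi fun b => (continuous_apply (b : I)).comp (f.symm.continuous.comp hext_cont)
  refine ⟨⟨⟨F, G, hGF, hFG⟩, hFcont, hGcont⟩, ⟨⟨G, F, hFG, hGF⟩, hGcont, hFcont⟩, ?_, ?_⟩
  · exact hFfact
  · exact hGfact
end

section
/- Let X = ∏_{n∈ℕ} X_n be a countable product of nonempty compact metric spaces. Then the group H(X) of self-homeomorphisms of X with the compact-open topology is an absolute extensor for zero-dimensional compact spaces: for every zero-dimensional compact Hausdorff space Y, every closed subset P ⊆ Y, and every continuous map g : P → H(X), there is a continuous map G : Y → H(X) with G|_P = g. -/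
universe u v

open Set

section ExtensionLemma

open TopologicalSpace

variable {M : Type*} [MetricSpace M] {Y : Type v} [TopologicalSpace Y] [CompactSpace Y]

/-- One-step approximation: improve a continuous approximate extension. -/
lemma approx_step (hY : IsTopologicalBasis {s : Set Y | IsClopen s})
    {P : Set Y} (hP : IsClosed P) (u : P → M) (hu : Continuous u)
    (v : C(Y, M)) {ε δ : ℝ} (hε : 0 < ε) (hδ : 0 < δ)
    (h : ∀ p : P, dist (v p) (u p) < ε) :
    ∃ v' : C(Y, M), (∀ p : P, dist (v' p) (u p) < δ) ∧ ∀ y, dist (v' y) (v y) ≤ ε + δ := by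
  classical
  have key : ∀ p : P, ∃ U : Set Y, IsClopen U ∧ (p : Y) ∈ U ∧
      (∀ q : P, (q : Y) ∈ U → dist (u q) (u p) < δ) ∧
      (∀ y ∈ U, dist (u p) (v y) < ε + δ) := by
    intro p
    have h1 : IsOpen (u ⁻¹' Metric.ball (u p) δ) := Metric.isOpen_ball.preimage hu
    rw [isOpen_induced_iff] at h1
    obtain ⟨W, hWopen, hWeq⟩ := h1
    have h2 : IsOpen {y : Y | dist (u p) (v y) < ε + δ} := by
      have : Continuous fun y : Y => dist (u p) (v y) :=
        (continuous_const.dist v.continuous)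
      exact isOpen_lt this continuous_const
    have hpW : (p : Y) ∈ W := by
      have : p ∈ u ⁻¹' Metric.ball (u p) δ := by
        simp [Metric.mem_ball, hδ]
      rw [← hWeq] at this
      exact this
    have hpN : (p : Y) ∈ W ∩ {y : Y | dist (u p) (v y) < ε + δ} := by
      refine ⟨hpW, ?_⟩
      show dist (u p) (v ↑p) < ε + δ
      rw [dist_comm]
      linarith [h p]
    obtain ⟨U, hU, hpU, hUsub⟩ := hY.exists_subset_of_mem_open hpN
      (hWopen.inter h2)
    refine ⟨U, hU, hpU, ?_, ?_⟩
    · intro q hq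
      have : (q : P) ∈ u ⁻¹' Metric.ball (u p) δ := by
        rw [← hWeq]
        exact (hUsub hq).1
      simpa [Metric.mem_ball] using this
    · intro y hy
      exact (hUsub hy).2
  choose U hUclopen hUmem hUq hUy using key
  have hPcomp : IsCompact P := hP.isCompact
  obtain ⟨t, ht⟩ := hPcomp.elim_finite_subcover (fun p : P => U p)
    (fun p => (hUclopen p).isOpen) (fun y hy => mem_iUnion.2 ⟨⟨y, hy⟩, hUmem _⟩)
  -- build the patched function over the list of chosen points
  have main : ∀ l : List P, ∃ w : C(Y, M),
      (∀ y : Y, (w y = v y ∨ ∃ p ∈ l, y ∈ U p ∧ w y = u p)) ∧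
      (∀ q : P, (∃ p ∈ l, (q : Y) ∈ U p) → dist (w q) (u q) < δ) := by
    intro l
    induction l with
    | nil =>
      exact ⟨v, fun y => Or.inl rfl, fun q hq => by
        obtain ⟨p, hp, _⟩ := hq; exact absurd hp List.not_mem_nil⟩
    | cons p l ih =>
      obtain ⟨w, hw1, hw2⟩ := ih
      have hcont : Continuous fun y : Y => if y ∈ U p then u p else w y := by
        apply Continuous.if
        · intro a ha
          rw [show {x : Y | x ∈ U p} = U p from rfl, (hUclopen p).frontier_eq] at ha
          exact absurd ha (notMem_empty a)
        · exact continuous_const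
        · exact w.continuous
      refine ⟨⟨fun y => if y ∈ U p then u p else w y, hcont⟩, ?_, ?_⟩
      · intro y
        by_cases hy : y ∈ U p
        · exact Or.inr ⟨p, List.mem_cons_self, hy, by simp [hy]⟩
        · rcases hw1 y with h' | ⟨p', hp', hyp', hval⟩
          · exact Or.inl (by simp [hy, h'])
          · exact Or.inr ⟨p', List.mem_cons_of_mem p hp', hyp', by simp [hy, hval]⟩
      · intro q hq
        by_cases hqp : (q : Y) ∈ U p
        · have := hUq p q hqp
          simpa [hqp, dist_comm] using this
        · obtain ⟨p', hp', hqp'⟩ := hq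
          rcases List.mem_cons.1 hp' with rfl | hp'
          · exact absurd hqp' hqp
          · have := hw2 q ⟨p', hp', hqp'⟩
            simpa [hqp] using this
  obtain ⟨w, hw1, hw2⟩ := main t.toList
  refine ⟨w, ?_, ?_⟩
  · intro q
    apply hw2
    have : (q : Y) ∈ ⋃ p ∈ t, U p := ht q.2
    rw [mem_iUnion₂] at this
    obtain ⟨p, hp, hqp⟩ := this
    exact ⟨p, Finset.mem_toList.2 hp, hqp⟩
  · intro y
    rcases hw1 y with h' | ⟨p, _, hyp, hval⟩
    · rw [h', dist_self]; positivity
    · rw [hval]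
      exact (hUy p y hyp).le

/-- Extension theorem: a continuous map from a closed subset of a zero-dimensional
compact space into a complete metric space extends continuously. -/
lemma extend_of_complete [CompleteSpace M] [Nonempty M]
    (hY : IsTopologicalBasis {s : Set Y | IsClopen s})
    {P : Set Y} (hP : IsClosed P) (u : P → M) (hu : Continuous u) :
    ∃ G : C(Y, M), ∀ p : P, G p = u p := by
  classical
  by_cases hne : Nonempty P
  swap
  · exact ⟨ContinuousMap.const Y (Classical.arbitrary M), fun p => absurd ⟨p⟩ hne⟩
  haveI := hne
  haveI : CompactSpace P := isCompact_iff_compactSpace.mp hP.isCompact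
  set b : M := Classical.arbitrary M with hb
  -- initial bound
  have hfc : Continuous fun p : P => dist b (u p) := continuous_const.dist hu
  obtain ⟨B, hB⟩ := (isCompact_range hfc).bddAbove
  have hB' : ∀ p : P, dist b (u p) ≤ B := fun p => hB (mem_range_self p)
  have hB0 : 0 ≤ B := le_trans dist_nonneg (hB' (Classical.arbitrary P))
  set ε₀ : ℝ := B + 1 with hε₀
  have hε₀pos : 0 < ε₀ := by positivity
  have step : ∀ (n : ℕ) (v : C(Y, M)), (∀ p : P, dist (v p) (u p) < ε₀ / 2 ^ n) →
      ∃ v' : C(Y, M), (∀ p : P, dist (v' p) (u p) < ε₀ / 2 ^ (n + 1)) ∧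
        dist v' v ≤ ε₀ / 2 ^ n + ε₀ / 2 ^ (n + 1) := by
    intro n v hv
    have hpos : (0:ℝ) < ε₀ / 2 ^ n := by positivity
    have hpos' : (0:ℝ) < ε₀ / 2 ^ (n + 1) := by positivity
    obtain ⟨v', h1, h2⟩ := approx_step hY hP u hu v hpos hpos' hv
    refine ⟨v', h1, ?_⟩
    rw [ContinuousMap.dist_le (by positivity)]
    exact h2
  choose! F hF1 hF2 using step
  set w : ℕ → C(Y, M) := fun n => Nat.rec (ContinuousMap.const Y b) (fun n vn => F n vn) n
    with hw
  have hwsucc : ∀ n, w (n + 1) = F n (w n) := fun n => rfl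
  have hwP : ∀ n, ∀ p : P, dist (w n p) (u p) < ε₀ / 2 ^ n := by
    intro n
    induction n with
    | zero =>
      intro p
      have : dist b (u p) ≤ B := hB' p
      simp only [hw, pow_zero, div_one]
      calc dist ((ContinuousMap.const Y b) (p : Y)) (u p) = dist b (u p) := rfl
        _ ≤ B := this
        _ < ε₀ := by rw [hε₀]; linarith
    | succ n ih =>
      rw [hwsucc]
      exact hF1 n (w n) ih
  have hwd : ∀ n, dist (w n) (w (n + 1)) ≤ (2 * ε₀) * (1 / 2) ^ n := by
    intro n
    have h := hF2 n (w n) (hwP n)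
    rw [← hwsucc] at h
    rw [dist_comm]
    calc dist (w (n+1)) (w n) ≤ ε₀ / 2 ^ n + ε₀ / 2 ^ (n + 1) := h
      _ ≤ ε₀ / 2 ^ n + ε₀ / 2 ^ n := by
          have h2 : ε₀ / 2 ^ (n + 1) ≤ ε₀ / 2 ^ n := by
            gcongr
            · norm_num
            · omega
          linarith
      _ = (2 * ε₀) * (1 / 2) ^ n := by
          rw [div_pow, one_pow]; field_simp; ring
  have hcauchy : CauchySeq w :=
    cauchySeq_of_le_geometric (1 / 2) (2 * ε₀) (by norm_num) hwd
  obtain ⟨G, hG⟩ := cauchySeq_tendsto_of_complete hcauchy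
  refine ⟨G, fun p => ?_⟩
  have h1 : Filter.Tendsto (fun n => w n (p : Y)) Filter.atTop (nhds (G (p : Y))) :=
    ((continuous_eval_const (p : Y)).continuousAt.tendsto.comp hG)
  have h2 : Filter.Tendsto (fun n => dist (w n (p : Y)) (u p)) Filter.atTop
      (nhds (dist (G (p : Y)) (u p))) := h1.dist tendsto_const_nhds
  have h3 : Filter.Tendsto (fun n => dist (w n (p : Y)) (u p)) Filter.atTop (nhds 0) := by
    apply squeeze_zero (fun n => dist_nonneg) (fun n => (hwP n p).le)
    have : Filter.Tendsto (fun n : ℕ => ε₀ * (1 / 2 : ℝ) ^ n) Filter.atTop (nhds (ε₀ * 0)) :=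
      (tendsto_pow_atTop_nhds_zero_of_lt_one (by norm_num) (by norm_num)).const_mul ε₀
    rw [mul_zero] at this
    convert this using 2 with n
    rw [div_pow, one_pow]
    rw [div_eq_mul_inv, one_div]
  exact dist_eq_zero.mp (tendsto_nhds_unique h2 h3)

end ExtensionLemma

section HomeoGroup

variable {Z : Type u} [MetricSpace Z] [CompactSpace Z]
set_option linter.unusedSectionVars false

/-- The canonical inverse of an element of the range of `toCM`. -/
noncomputable def invCM (s : ↥(Set.range (toCM (Z := Z)))) : C(Z, Z) :=
  toCM (Classical.choose s.2).symm

lemma comp_invCM (s : ↥(Set.range (toCM (Z := Z)))) :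
    (s : C(Z, Z)).comp (invCM s) = ContinuousMap.id Z := by
  have h := Classical.choose_spec s.2
  ext x
  show (s : C(Z, Z)) ((Classical.choose s.2).symm x) = x
  rw [← DFunLike.congr_fun h ((Classical.choose s.2).symm x)]
  exact (Classical.choose s.2).apply_symm_apply x

lemma invCM_comp (s : ↥(Set.range (toCM (Z := Z)))) :
    (invCM s).comp (s : C(Z, Z)) = ContinuousMap.id Z := by
  have h := Classical.choose_spec s.2
  ext x
  show (Classical.choose s.2).symm ((s : C(Z, Z)) x) = x
  rw [← DFunLike.congr_fun h x]
  exact (Classical.choose s.2).symm_apply_apply x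

lemma continuous_invCM : Continuous (invCM (Z := Z)) := by
  rw [Metric.continuous_iff]
  intro s ε hε
  have hu : UniformContinuous (invCM s) :=
    CompactSpace.uniformContinuous_of_continuous (invCM s).continuous
  rw [Metric.uniformContinuous_iff] at hu
  obtain ⟨δ, hδ, hδ'⟩ := hu ε hε
  refine ⟨δ, hδ, fun t ht => ?_⟩
  rw [Subtype.dist_eq] at ht
  rw [ContinuousMap.dist_lt_iff hε]
  intro x
  set y : Z := invCM t x with hy
  have h1 : (t : C(Z, Z)) y = x := by
    have := comp_invCM t
    calc (t : C(Z, Z)) y = ((t : C(Z, Z)).comp (invCM t)) x := rfl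
      _ = x := by rw [this]; rfl
  have h2 : dist ((s : C(Z, Z)) y) x < δ := by
    rw [← h1]
    calc dist ((s : C(Z, Z)) y) ((t : C(Z, Z)) y)
        ≤ dist (s : C(Z, Z)) (t : C(Z, Z)) := ContinuousMap.dist_apply_le_dist y
      _ < δ := by rw [dist_comm]; exact ht
  have h3 := hδ' h2
  have h4 : invCM s ((s : C(Z, Z)) y) = y := by
    have := invCM_comp s
    calc invCM s ((s : C(Z, Z)) y) = ((invCM s).comp (s : C(Z, Z))) y := rfl
      _ = y := by rw [this]; rfl
  rw [h4] at h3
  exact h3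

end HomeoGroup


theorem stmt_aux {Z : Type u} [MetricSpace Z] [CompactSpace Z]
    (Y : Type v) [TopologicalSpace Y] [CompactSpace Y] [T2Space Y]
    (hY : TopologicalSpace.IsTopologicalBasis {s : Set Y | IsClopen s})
    (P : Set Y) (hP : IsClosed P)
    (g : P → ↥(Set.range (toCM (Z := Z)))) (hg : Continuous g) :
    ∃ G : Y → ↥(Set.range (toCM (Z := Z))), Continuous G ∧ ∀ p : P, G ↑p = g p := by
  classical
  -- the pair space
  set MC : Set (C(Z, Z) × C(Z, Z)) :=
    {q | q.1.comp q.2 = ContinuousMap.id Z ∧ q.2.comp q.1 = ContinuousMap.id Z} with hMC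
  have hMCclosed : IsClosed MC := by
    have c1 : Continuous fun q : C(Z, Z) × C(Z, Z) => q.1.comp q.2 :=
      ContinuousMap.continuous_comp'.comp continuous_swap
    have c2 : Continuous fun q : C(Z, Z) × C(Z, Z) => q.2.comp q.1 :=
      ContinuousMap.continuous_comp'
    exact (isClosed_singleton.preimage c1).inter (isClosed_singleton.preimage c2)
  haveI : CompleteSpace ↥MC := hMCclosed.completeSpace_coe
  haveI : Nonempty ↥MC := ⟨⟨(ContinuousMap.id Z, ContinuousMap.id Z),
    ⟨ContinuousMap.id_comp _, ContinuousMap.id_comp _⟩⟩⟩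
  -- maps between H(X) and MC
  have hmem : ∀ s : ↥(Set.range (toCM (Z := Z))),
      (((s : C(Z, Z)), invCM (Z := Z) s) : C(Z, Z) × C(Z, Z)) ∈ MC := by
    intro s
    rw [hMC]
    exact ⟨comp_invCM s, invCM_comp s⟩
  set Φ : ↥(Set.range (toCM (Z := Z))) → ↥MC := fun s =>
    ⟨((s : C(Z, Z)), invCM (Z := Z) s), hmem s⟩ with hΦ
  have hΦcont : Continuous Φ :=
    (continuous_subtype_val.prodMk continuous_invCM).subtype_mk _
  set Ψ : ↥MC → ↥(Set.range (toCM (Z := Z))) := fun q =>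
    ⟨q.1.1, ⟨{ toFun := q.1.1, invFun := q.1.2,
               left_inv := fun x => DFunLike.congr_fun q.2.2 x,
               right_inv := fun x => DFunLike.congr_fun q.2.1 x,
               continuous_toFun := q.1.1.continuous,
               continuous_invFun := q.1.2.continuous }, rfl⟩⟩ with hΨ
  have hΨcont : Continuous Ψ :=
    ((continuous_fst.comp continuous_subtype_val)).subtype_mk _
  have hΨΦ : ∀ s, Ψ (Φ s) = s := fun s => Subtype.ext rfl
  -- extend
  obtain ⟨G₀, hG₀⟩ := extend_of_complete (M := ↥MC) hY hP (fun p => Φ (g p))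
    (hΦcont.comp hg)
  refine ⟨fun y => Ψ (G₀ y), hΨcont.comp G₀.continuous, fun p => ?_⟩
  show Ψ (G₀ ↑p) = g p
  rw [hG₀ p, hΨΦ]

/-- For a countable product `X = ∏_{n ∈ ℕ} X_n` of nonempty compact metric spaces,
the homeomorphism group `H(X)` with the compact-open topology is an absolute extensor for
zero-dimensional compact Hausdorff spaces. -/
theorem stmt11 {X : ℕ → Type u} [∀ n, MetricSpace (X n)]
    [∀ n, CompactSpace (X n)] [∀ n, Nonempty (X n)]
    (Y : Type v) [TopologicalSpace Y] [CompactSpace Y] [T2Space Y]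
    (hY : TopologicalSpace.IsTopologicalBasis {s : Set Y | IsClopen s})
    (P : Set Y) (hP : IsClosed P)
    (g : P → ↥(Set.range (toCM (Z := ∀ n, X n)))) (hg : Continuous g) :
    ∃ G : Y → ↥(Set.range (toCM (Z := ∀ n, X n))), Continuous G ∧ ∀ p : P, G ↑p = g p := by
  classical
  haveI : TopologicalSpace.MetrizableSpace (∀ n, X n) := UniformSpace.metrizableSpace
  letI m : MetricSpace (∀ n, X n) := TopologicalSpace.metrizableSpaceMetric _
  refine @stmt_aux (∀ n, X n) m ?_ Y _ _ _ hY P hP g hg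
  exact (inferInstance : CompactSpace (∀ n, X n))
end
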